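/- arXiv:2412.12889 — 6 statements merged into one kernel-verified Lean document; each statement's English description precedes it below -/
import Mathlib

section
/- For every integer n ≥ 1 there exists a constant C > 0 depending only on n such that the following holds: for every finite set Σ ⊆ ℤⁿ and every y ∈ ℝⁿ with |y − σ| ≥ 1/2 for all σ ∈ Σ, one has ∑_{σ ∈ Σ} 1/|y − σ|^{n−1} ≤ C·(#Σ)^{1/n}, where #Σ is the cardinality of Σ. -/
open Finset

private lemma coord_le_dist {n : ℕ} (y x : EuclideanSpace ℝ (Fin n)) (i : Fin n) :
    |y i - x i| ≤ dist y x := by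
  rw [EuclideanSpace.dist_eq, ← Real.sqrt_sq_eq_abs]
  apply Real.sqrt_le_sqrt
  calc (y i - x i)^2 = dist (y i) (x i) ^ 2 := by rw [Real.dist_eq, sq_abs]
    _ ≤ ∑ j, dist (y j) (x j) ^ 2 :=
      Finset.single_le_sum (f := fun j => dist (y j) (x j) ^ 2) (fun j _ => by positivity) (Finset.mem_univ i)

open scoped Classical in
private lemma count_le {n : ℕ} (S : Finset (Fin n → ℤ)) (y : EuclideanSpace ℝ (Fin n))
    (R : ℝ) (hR : 0 ≤ R) :
    ((S.filter (fun σ => dist y (show EuclideanSpace ℝ (Fin n) from WithLp.toLp 2 (fun i => (σ i : ℝ))) ≤ R)).card : ℝ)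
      ≤ (2*R+2)^n := by
  set T := Fintype.piFinset (fun i : Fin n => Finset.Icc ⌈y i - R⌉ ⌊y i + R⌋) with hT
  have hsub : S.filter (fun σ => dist y (show EuclideanSpace ℝ (Fin n) from WithLp.toLp 2 (fun i => (σ i : ℝ))) ≤ R) ⊆ T := by
    intro σ hσ
    rw [Finset.mem_filter] at hσ
    rw [hT, Fintype.mem_piFinset]
    intro i
    have h1 : |y i - (σ i : ℝ)| ≤ R :=
      le_trans (coord_le_dist y (WithLp.toLp 2 (fun i => (σ i : ℝ))) i) hσ.2
    rw [abs_le] at h1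
    rw [Finset.mem_Icc]
    constructor
    · exact Int.ceil_le.2 (by linarith [h1.1])
    · exact Int.le_floor.2 (by linarith [h1.2])
  calc ((S.filter _).card : ℝ) ≤ (T.card : ℝ) := by exact_mod_cast Finset.card_le_card hsub
    _ = ∏ i : Fin n, ((Finset.Icc ⌈y i - R⌉ ⌊y i + R⌋).card : ℝ) := by
        rw [hT, Fintype.card_piFinset]; push_cast; ring
    _ ≤ ∏ _i : Fin n, (2*R+2) := by
        apply Finset.prod_le_prod (fun i _ => by positivity)
        intro i _
        rw [Int.card_Icc]
        have h2 : ((⌊y i + R⌋ + 1 - ⌈y i - R⌉).toNat : ℝ) = ((((⌊y i + R⌋ + 1 - ⌈y i - R⌉).toNat : ℤ)) : ℝ) := by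
          push_cast; ring
        rw [h2, Int.toNat_eq_max]
        push_cast
        have := Int.floor_le (y i + R)
        have := Int.le_ceil (y i - R)
        rw [max_le_iff]
        constructor <;> [push_cast; skip] <;> linarith
    _ = (2*R+2)^n := by rw [Finset.prod_const, Finset.card_univ, Fintype.card_fin]
open Finset

open scoped Classical in
private lemma key {α : Type*} (n : ℕ) (hn : 1 ≤ n) (S : Finset α) (d : α → ℝ)
    (hd : ∀ σ ∈ S, (1:ℝ)/2 ≤ d σ)
    (hcount : ∀ R : ℝ, 1 ≤ R → ((S.filter (fun σ => d σ ≤ R)).card : ℝ) ≤ (4*R)^n) :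
    ∑ σ ∈ S, 1/(d σ)^(n-1) ≤ ((4:ℝ)^n * 2^(n-1) * 4 + 1) * (S.card : ℝ)^((1:ℝ)/n) := by
  have hn0 : (n:ℝ) ≠ 0 := by positivity
  rcases S.eq_empty_or_nonempty with rfl | hSne
  · simp only [Finset.sum_empty, Finset.card_empty, Nat.cast_zero]
    positivity
  have hN1 : 1 ≤ (S.card : ℝ) := by exact_mod_cast hSne.card_pos
  have hNpos : (0:ℝ) < S.card := by linarith
  have hrpos : (0:ℝ) < (S.card : ℝ)^((1:ℝ)/n) := Real.rpow_pos_of_pos hNpos _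
  have hr1 : (1:ℝ) ≤ (S.card : ℝ)^((1:ℝ)/n) := Real.one_le_rpow hN1 (by positivity)
  -- choose J minimal with card ≤ 2^(J*n)
  have hex : ∃ J : ℕ, S.card ≤ 2^(J*n) := by
    refine ⟨S.card, le_trans (Nat.lt_two_pow_self (n := S.card)).le (Nat.pow_le_pow_right (by norm_num) ?_)⟩
    exact Nat.le_mul_of_pos_right _ hn
  set J := Nat.find hex with hJ
  have hJspec : S.card ≤ 2^(J*n) := Nat.find_spec hex
  set T : ℝ := 2^J with hTdef
  have hT1 : (1:ℝ) ≤ T := one_le_pow₀ (by norm_num)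
  have hTpos : (0:ℝ) < T := by linarith
  -- N^{1/n} ≤ T
  have hNT : (S.card : ℝ)^((1:ℝ)/n) ≤ T := by
    have h1 : (S.card : ℝ) ≤ T^n := by
      rw [hTdef, ← pow_mul]; exact_mod_cast hJspec
    calc (S.card : ℝ)^((1:ℝ)/n) ≤ (T^n)^((1:ℝ)/n) :=
          Real.rpow_le_rpow (by positivity) h1 (by positivity)
      _ = T := by
          rw [← Real.rpow_natCast T n, ← Real.rpow_mul hTpos.le, mul_one_div_cancel hn0,
            Real.rpow_one]
  -- T ≤ 2 N^{1/n}
  have hTN : T ≤ 2 * (S.card : ℝ)^((1:ℝ)/n) := by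
    rcases Nat.eq_zero_or_pos J with hJ0 | hJpos
    · rw [hTdef, hJ0, pow_zero]; linarith
    · have hmin : ¬ (S.card ≤ 2^((J-1)*n)) := Nat.find_min hex (Nat.sub_lt hJpos one_pos)
      push_neg at hmin
      have h1 : ((2:ℝ)^(J-1))^n ≤ (S.card : ℝ) := by
        rw [← pow_mul]; exact_mod_cast hmin.le
      have h2 : (2:ℝ)^(J-1) ≤ (S.card : ℝ)^((1:ℝ)/n) := by
        calc (2:ℝ)^(J-1) = (((2:ℝ)^(J-1))^n)^((1:ℝ)/n) := by
              rw [← Real.rpow_natCast ((2:ℝ)^(J-1)) n, ← Real.rpow_mul (by positivity),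
                mul_one_div_cancel hn0, Real.rpow_one]
          _ ≤ (S.card : ℝ)^((1:ℝ)/n) := Real.rpow_le_rpow (by positivity) h1 (by positivity)
      calc T = 2 * (2:ℝ)^(J-1) := by
            rw [hTdef, ← pow_succ', Nat.sub_add_cancel hJpos]
        _ ≤ 2 * (S.card : ℝ)^((1:ℝ)/n) := by linarith
  -- basic positivity
  have hdpos : ∀ σ ∈ S, 0 < d σ := fun σ hσ => lt_of_lt_of_le (by norm_num) (hd σ hσ)
  set M := (S.card : ℝ)^((1:ℝ)/n) with hM
  have hcastn : ((n-1:ℕ):ℝ) = (n:ℝ) - 1 := by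
    rw [Nat.cast_sub hn]; norm_num
  -- far part
  have hfar : ∑ σ ∈ S.filter (fun σ => ¬ d σ < T), 1/(d σ)^(n-1) ≤ M := by
    have hterm : ∀ σ ∈ S.filter (fun σ => ¬ d σ < T), 1/(d σ)^(n-1) ≤ 1/M^(n-1) := by
      intro σ hσ
      rw [Finset.mem_filter] at hσ
      have h1 : M ≤ d σ := le_trans hNT (not_lt.1 hσ.2)
      have hMpos : 0 < M := hrpos
      exact one_div_le_one_div_of_le (by positivity) (pow_le_pow_left₀ hMpos.le h1 _)
    calc ∑ σ ∈ S.filter (fun σ => ¬ d σ < T), 1/(d σ)^(n-1)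
        ≤ ∑ _σ ∈ S.filter (fun σ => ¬ d σ < T), 1/M^(n-1) := Finset.sum_le_sum hterm
      _ = ((S.filter (fun σ => ¬ d σ < T)).card : ℝ) * (1/M^(n-1)) := by
          rw [Finset.sum_const, nsmul_eq_mul]
      _ ≤ (S.card : ℝ) * (1/M^(n-1)) := by
          have : ((S.filter (fun σ => ¬ d σ < T)).card : ℝ) ≤ (S.card : ℝ) := by
            exact_mod_cast Finset.card_le_card (Finset.filter_subset _ _)
          have h2 : (0:ℝ) ≤ 1/M^(n-1) := by positivity
          nlinarith
      _ = M := by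
          have hMn : M^n = (S.card:ℝ) := by
            rw [hM, ← Real.rpow_natCast ((S.card:ℝ)^((1:ℝ)/n)) n, ← Real.rpow_mul hNpos.le,
              one_div, inv_mul_cancel₀ hn0, Real.rpow_one]
          have hps : M^(n-1) * M = M^n := by rw [← pow_succ, Nat.sub_add_cancel hn]
          have hne : M^(n-1) ≠ 0 := by positivity
          rw [← hMn, ← hps]
          field_simp
  -- shells
  set shell : ℕ → Finset α := fun j => S.filter (fun σ => (2:ℝ)^j ≤ 2 * d σ ∧ d σ < 2^j)
    with hshell
  have hsubset : S.filter (fun σ => d σ < T) ⊆ (Finset.range (J+1)).biUnion shell := by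
    intro σ hσ
    rw [Finset.mem_filter] at hσ
    have hdσ := hd σ hσ.1
    have hex2 : ∃ j : ℕ, d σ < 2^j := ⟨J, hσ.2⟩
    have hj1 : d σ < 2^(Nat.find hex2) := Nat.find_spec hex2
    have hjJ : Nat.find hex2 ≤ J := Nat.find_min' hex2 hσ.2
    rw [Finset.mem_biUnion]
    refine ⟨Nat.find hex2, Finset.mem_range.2 (Nat.lt_succ_of_le hjJ), ?_⟩
    rw [hshell, Finset.mem_filter]
    refine ⟨hσ.1, ?_, hj1⟩
    rcases Nat.eq_zero_or_pos (Nat.find hex2) with h0 | hpos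
    · rw [h0, pow_zero]; linarith
    · have h3 := Nat.find_min hex2 (Nat.sub_lt hpos one_pos)
      push_neg at h3
      calc (2:ℝ)^(Nat.find hex2) = 2 * 2^(Nat.find hex2 - 1) := by
            rw [← pow_succ', Nat.sub_add_cancel hpos]
        _ ≤ 2 * d σ := by linarith [h3]
  have hdisj : (↑(Finset.range (J+1)) : Set ℕ).PairwiseDisjoint shell := by
    have hkey : ∀ i j : ℕ, i < j → Disjoint (shell i) (shell j) := by
      intro i j hij
      rw [Finset.disjoint_left]
      intro σ hσi hσj
      rw [hshell, Finset.mem_filter] at hσi hσj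
      have h1 : (2:ℝ)^(i+1) ≤ 2^j := pow_le_pow_right₀ one_le_two hij
      have h2 : (2:ℝ)^(i+1) = 2 * 2^i := pow_succ' 2 i
      linarith [hσi.2.2, hσj.2.1]
    intro i _ j _ hij
    rcases hij.lt_or_gt with h | h
    · exact hkey i j h
    · exact (hkey j i h).symm
  have hshellbound : ∀ j : ℕ, ∑ σ ∈ shell j, 1/(d σ)^(n-1) ≤ 4^n * 2^(n-1) * 2^j := by
    intro j
    have h2j1 : (1:ℝ) ≤ 2^j := one_le_pow₀ (by norm_num)
    have hterm : ∀ σ ∈ shell j, 1/(d σ)^(n-1) ≤ (2/2^j)^(n-1) := by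
      intro σ hσ
      rw [hshell, Finset.mem_filter] at hσ
      have h2 : (2:ℝ)^j/2 ≤ d σ := by linarith [hσ.2.1]
      have hp : (0:ℝ) < 2^j/2 := by positivity
      calc 1/(d σ)^(n-1) ≤ 1/((2:ℝ)^j/2)^(n-1) :=
            one_div_le_one_div_of_le (by positivity) (pow_le_pow_left₀ hp.le h2 _)
        _ = (2/2^j)^(n-1) := by rw [← one_div_pow, one_div_div]
    have hcard : ((shell j).card : ℝ) ≤ (4*2^j)^n := by
      have hsub2 : shell j ⊆ S.filter (fun σ => d σ ≤ 2^j) := by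
        intro σ hσ
        rw [hshell, Finset.mem_filter] at hσ
        exact Finset.mem_filter.2 ⟨hσ.1, hσ.2.2.le⟩
      calc ((shell j).card : ℝ) ≤ ((S.filter (fun σ => d σ ≤ 2^j)).card : ℝ) := by
            exact_mod_cast Finset.card_le_card hsub2
        _ ≤ (4*2^j)^n := hcount _ h2j1
    have harith : (4*(2:ℝ)^j)^n * (2/2^j)^(n-1) = 4^n * 2^(n-1) * 2^j := by
      have hps : ((2:ℝ)^j)^n = ((2:ℝ)^j)^(n-1) * 2^j := by
        rw [← pow_succ, Nat.sub_add_cancel hn]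
      rw [mul_pow, div_pow, hps]
      have hne : ((2:ℝ)^j)^(n-1) ≠ 0 := by positivity
      field_simp
    calc ∑ σ ∈ shell j, 1/(d σ)^(n-1)
        ≤ ∑ _σ ∈ shell j, (2/(2:ℝ)^j)^(n-1) := Finset.sum_le_sum hterm
      _ = ((shell j).card : ℝ) * (2/2^j)^(n-1) := by rw [Finset.sum_const, nsmul_eq_mul]
      _ ≤ (4*2^j)^n * (2/2^j)^(n-1) := by
          have : (0:ℝ) ≤ (2/2^j)^(n-1) := by positivity
          nlinarith
      _ = 4^n * 2^(n-1) * 2^j := harith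
  have hnear : ∑ σ ∈ S.filter (fun σ => d σ < T), 1/(d σ)^(n-1)
      ≤ (4:ℝ)^n * 2^(n-1) * 4 * M := by
    have h1 : ∑ σ ∈ S.filter (fun σ => d σ < T), 1/(d σ)^(n-1)
        ≤ ∑ σ ∈ (Finset.range (J+1)).biUnion shell, 1/(d σ)^(n-1) := by
      apply Finset.sum_le_sum_of_subset_of_nonneg hsubset
      intro σ hσ _
      obtain ⟨j, -, hj⟩ := Finset.mem_biUnion.1 hσ
      rw [hshell, Finset.mem_filter] at hj
      have := hdpos σ hj.1
      positivity
    rw [Finset.sum_biUnion hdisj] at h1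
    have h2 : ∑ j ∈ Finset.range (J+1), ∑ σ ∈ shell j, 1/(d σ)^(n-1)
        ≤ ∑ j ∈ Finset.range (J+1), (4:ℝ)^n * 2^(n-1) * 2^j :=
      Finset.sum_le_sum (fun j _ => hshellbound j)
    have h3 : ∑ j ∈ Finset.range (J+1), (4:ℝ)^n * 2^(n-1) * 2^j
        = (4:ℝ)^n * 2^(n-1) * (2^(J+1) - 1) := by
      rw [← Finset.mul_sum, geom_sum_eq (by norm_num : (2:ℝ) ≠ 1)]
      norm_num
    have h4 : (2:ℝ)^(J+1) = 2 * T := by rw [hTdef, pow_succ']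
    have h5 : (0:ℝ) ≤ (4:ℝ)^n * 2^(n-1) := by positivity
    have h6 : (2:ℝ)^(J+1) - 1 ≤ 4 * M := by
      rw [h4]; linarith
    calc ∑ σ ∈ S.filter (fun σ => d σ < T), 1/(d σ)^(n-1)
        ≤ (4:ℝ)^n * 2^(n-1) * (2^(J+1) - 1) := by linarith
      _ ≤ (4:ℝ)^n * 2^(n-1) * (4 * M) := by nlinarith
      _ = (4:ℝ)^n * 2^(n-1) * 4 * M := by ring
  rw [← Finset.sum_filter_add_sum_filter_not S (fun σ => d σ < T)]
  have hrhs : ((4:ℝ)^n * 2^(n-1) * 4 + 1) * M = (4:ℝ)^n * 2^(n-1) * 4 * M + M := by ring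
  rw [hM] at hnear hfar ⊢
  linarith [hnear, hfar]

/-- For every integer `n ≥ 1` there exists a constant `C > 0` depending only on `n` such that
for every finite set `Σ ⊆ ℤⁿ` and every `y ∈ ℝⁿ` with `|y − σ| ≥ 1/2` for all `σ ∈ Σ`, one has
`∑_{σ ∈ Σ} 1/|y − σ|^{n−1} ≤ C·(#Σ)^{1/n}`. -/
theorem stmt_1 (n : ℕ) (hn : 1 ≤ n) :
    ∃ C : ℝ, 0 < C ∧
      ∀ (S : Finset (Fin n → ℤ)) (y : EuclideanSpace ℝ (Fin n)),
        (∀ σ ∈ S, (1 : ℝ) / 2 ≤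
          dist y (show EuclideanSpace ℝ (Fin n) from WithLp.toLp 2 (fun i => (σ i : ℝ)))) →
        ∑ σ ∈ S, 1 / (dist y (show EuclideanSpace ℝ (Fin n) from WithLp.toLp 2 (fun i => (σ i : ℝ)))) ^ (n - 1)
          ≤ C * (S.card : ℝ) ^ ((1 : ℝ) / n) := by
  refine ⟨(4:ℝ)^n * 2^(n-1) * 4 + 1, by positivity, ?_⟩
  intro S y hy
  apply key n hn S
    (fun σ => dist y (show EuclideanSpace ℝ (Fin n) from WithLp.toLp 2 (fun i => (σ i : ℝ)))) hy
  intro R hR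
  calc ((S.filter (fun σ =>
          dist y (show EuclideanSpace ℝ (Fin n) from WithLp.toLp 2 (fun i => (σ i : ℝ))) ≤ R)).card : ℝ)
      ≤ (2*R+2)^n := count_le S y R (by linarith)
    _ ≤ (4*R)^n := pow_le_pow_left₀ (by linarith) (by linarith) n
end

section
/- Let M be a metric space with geodesic points. Given finitely many open balls B(a₁, ρ₁), …, B(a_J, ρ_J) in M with all ρ_j > 0, there exist finitely many points b₁, …, b_K ∈ M and radii r₁, …, r_K > 0 such that the closed balls B̄(b₁, r₁), …, B̄(b_K, r_K) are pairwise disjoint, the union of the open balls B(b₁, r₁), …, B(b_K, r_K) contains B(a₁, ρ₁) ∪ ⋯ ∪ B(a_J, ρ_J), and r₁ + ⋯ + r_K ≤ ρ₁ + ⋯ + ρ_J. -/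
open Metric Set Finset in
private lemma stmt_3_aux {M : Type*} [MetricSpace M]
    (hgeo : ∀ x y : M, ∀ s t : ℝ, 0 ≤ s → 0 ≤ t → s + t = dist x y →
      ∃ z : M, dist x z = s ∧ dist z y = t) :
    ∀ n : ℕ, ∀ (ι : Type) [Fintype ι], Fintype.card ι ≤ n →
    ∀ (a : ι → M) (ρ : ι → ℝ), (∀ j, 0 < ρ j) →
    ∃ (K : ℕ) (b : Fin K → M) (r : Fin K → ℝ),
      (∀ k, 0 < r k) ∧
      (∀ k k', k ≠ k' →
        Disjoint (Metric.closedBall (b k) (r k)) (Metric.closedBall (b k') (r k'))) ∧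
      (⋃ j, Metric.ball (a j) (ρ j)) ⊆ (⋃ k, Metric.ball (b k) (r k)) ∧
      ∑ k, r k ≤ ∑ j, ρ j := by
  intro n
  induction n with
  | zero =>
    intro ι _ hcard a ρ hρ
    refine ⟨0, ![], ![], by simp, by simp, ?_, ?_⟩
    · have : IsEmpty ι := Fintype.card_eq_zero_iff.mp (Nat.le_zero.mp hcard)
      simp
    · simpa using Finset.sum_nonneg fun j _ => (hρ j).le
  | succ n ih =>
    intro ι _ hcard a ρ hρ
    classical
    by_cases hdisj : ∀ i j : ι, i ≠ j →
        Disjoint (Metric.closedBall (a i) (ρ i)) (Metric.closedBall (a j) (ρ j))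
    · -- already pairwise disjoint: reindex by Fin
      let e := Fintype.equivFin ι
      refine ⟨Fintype.card ι, a ∘ e.symm, ρ ∘ e.symm, fun k => hρ _, ?_, ?_, ?_⟩
      · intro k k' hkk'
        exact hdisj _ _ (fun h => hkk' (by simpa using congrArg e h))
      · intro x hx
        obtain ⟨j, hj⟩ := Set.mem_iUnion.mp hx
        exact Set.mem_iUnion.mpr ⟨e j, by simpa using hj⟩
      · exact le_of_eq (Equiv.sum_comp e.symm ρ)
    · push_neg at hdisj
      obtain ⟨i, j, hij, hnd⟩ := hdisj
      obtain ⟨x, hxi, hxj⟩ := Set.not_disjoint_iff.mp hnd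
      have hd : dist (a i) (a j) ≤ ρ i + ρ j := by
        calc dist (a i) (a j) ≤ dist (a i) x + dist x (a j) := dist_triangle _ _ _
        _ ≤ ρ i + ρ j := by
            rw [dist_comm (a i) x]
            exact add_le_add (Metric.mem_closedBall.mp hxi) (Metric.mem_closedBall.mp hxj)
      set d := dist (a i) (a j) with hdDef
      set s := min d (ρ j) with hsDef
      have hs0 : 0 ≤ s := le_min dist_nonneg (hρ j).le
      have hsle : s ≤ ρ j := min_le_right _ _
      have hsd : s ≤ d := min_le_left _ _
      have ht0 : 0 ≤ d - s := by linarith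
      have htle : d - s ≤ ρ i := by
        rcases le_total d (ρ j) with h | h
        · simp [hsDef, min_eq_left h]
          exact (hρ i).le
        · simp [hsDef, min_eq_right h]
          linarith
      obtain ⟨c, hc1, hc2⟩ := hgeo (a i) (a j) s (d - s) hs0 ht0 (by ring)
      -- new index type
      set a' : Option {k : ι // k ≠ i ∧ k ≠ j} → M :=
        fun o => o.elim c (fun k => a k.1) with ha'
      set ρ' : Option {k : ι // k ≠ i ∧ k ≠ j} → ℝ :=
        fun o => o.elim (ρ i + ρ j) (fun k => ρ k.1) with hρ'
      have hρ'pos : ∀ k, 0 < ρ' k := by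
        rintro (_ | k)
        · exact add_pos (hρ i) (hρ j)
        · exact hρ _
      have hcard' : Fintype.card (Option {k : ι // k ≠ i ∧ k ≠ j}) ≤ n := by
        have h2 : 2 ≤ Fintype.card ι := Fintype.one_lt_card_iff.mpr ⟨i, j, hij⟩
        have : Fintype.card {k : ι // k ≠ i ∧ k ≠ j} =
            ((Finset.univ.erase j).erase i).card := by
          rw [Fintype.card_subtype]
          congr 1
          ext x
          simp [and_comm]
        rw [Fintype.card_option, this,
          Finset.card_erase_of_mem (by simp [hij]),
          Finset.card_erase_of_mem (by simp)]
        simp only [Finset.card_univ]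
        omega
      obtain ⟨K, b, r, hr, hdis, hsub, hsum⟩ := ih _ hcard' a' ρ' hρ'pos
      refine ⟨K, b, r, hr, hdis, ?_, ?_⟩
      · refine subset_trans ?_ hsub
        intro x hx
        obtain ⟨k, hk⟩ := Set.mem_iUnion.mp hx
        by_cases hki : k = i
        · refine Set.mem_iUnion.mpr ⟨none, ?_⟩
          subst hki
          simp only [ha', hρ', Option.elim] at *
          calc dist x c ≤ dist x (a k) + dist (a k) c := dist_triangle _ _ _
          _ < ρ k + s := add_lt_add_of_lt_of_le (Metric.mem_ball.mp hk) (le_of_eq hc1)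
          _ ≤ ρ k + ρ j := by linarith
        · by_cases hkj : k = j
          · refine Set.mem_iUnion.mpr ⟨none, ?_⟩
            subst hkj
            simp only [ha', hρ', Option.elim] at *
            calc dist x c ≤ dist x (a k) + dist (a k) c := dist_triangle _ _ _
            _ < ρ k + (d - s) := by
                have : dist (a k) c = d - s := by rw [dist_comm]; exact hc2
                rw [this]
                exact add_lt_add_of_lt_of_le (Metric.mem_ball.mp hk) le_rfl
            _ ≤ ρ i + ρ k := by linarith
          · exact Set.mem_iUnion.mpr ⟨some ⟨k, hki, hkj⟩, hk⟩
      · refine hsum.trans (le_of_eq ?_)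
        have h1 : ∑ k, ρ' k =
            (ρ i + ρ j) + ∑ k : {k : ι // k ≠ i ∧ k ≠ j}, ρ k.1 := by
          rw [Fintype.sum_option]; rfl
        have h2 : ∑ k : {k : ι // k ≠ i ∧ k ≠ j}, ρ k.1 =
            ∑ k ∈ (Finset.univ.erase j).erase i, ρ k :=
          (Finset.sum_subtype (p := fun k => k ≠ i ∧ k ≠ j)
            ((Finset.univ.erase j).erase i) (fun x => by simp [and_comm]) ρ).symm
        have h3 : ∑ k : ι, ρ k =
            ρ j + (ρ i + ∑ k ∈ (Finset.univ.erase j).erase i, ρ k) := by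
          rw [Finset.add_sum_erase _ ρ (Finset.mem_erase.mpr ⟨hij, Finset.mem_univ i⟩),
            Finset.add_sum_erase _ ρ (Finset.mem_univ j)]
        rw [h1, h2, h3]
        ring

/-- In a metric space with geodesic points, finitely many open balls can be covered by
finitely many open balls whose closures are pairwise disjoint and whose radii have a sum
not exceeding the sum of the original radii. -/
theorem stmt_3 {M : Type*} [MetricSpace M]
    (hgeo : ∀ x y : M, ∀ s t : ℝ, 0 ≤ s → 0 ≤ t → s + t = dist x y →
      ∃ z : M, dist x z = s ∧ dist z y = t)
    (J : ℕ) (a : Fin J → M) (ρ : Fin J → ℝ) (hρ : ∀ j, 0 < ρ j) :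
    ∃ (K : ℕ) (b : Fin K → M) (r : Fin K → ℝ),
      (∀ k, 0 < r k) ∧
      (∀ k k', k ≠ k' →
        Disjoint (Metric.closedBall (b k) (r k)) (Metric.closedBall (b k') (r k'))) ∧
      (⋃ j, Metric.ball (a j) (ρ j)) ⊆ (⋃ k, Metric.ball (b k) (r k)) ∧
      ∑ k, r k ≤ ∑ j, ρ j := by
  exact stmt_3_aux hgeo J (Fin J) (Fintype.card_fin J).le a ρ hρ
end

section
/- Let n, m ≥ 1 and W(θ, z) = ∏_{j=1}^{n} cos²(θ_j/2) + ∑_{j=1}^{m} z_j². Let θ ∈ ℝⁿ with θ ≠ 0 and |θ_j| ≤ π for all j, let z ∈ ℝᵐ, and suppose W(θ, z) > 0. For t ∈ [0, 1] set s(t) := 1 + t(π/‖θ‖_∞ − 1), where ‖θ‖_∞ = max_j |θ_j|. Then for all 0 ≤ t₀ < t₁ ≤ 1 one has W(s(t₁)·θ, (1 − t₁)·z) < W(s(t₀)·θ, (1 − t₀)·z); that is, W is strictly decreasing along the deformation Θ(t, (θ, z)) := (s(t)θ, (1 − t)z) at every point not in the zero set of W. -/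
/-- Let `W(θ, z) = ∏ⱼ cos²(θⱼ/2) + ∑ⱼ zⱼ²`. For `θ ≠ 0` with `|θⱼ| ≤ π` for all `j`,
`z ∈ ℝᵐ` and `W(θ, z) > 0`, setting `s(t) = 1 + t(π/‖θ‖_∞ − 1)`, the function
`t ↦ W(s(t)θ, (1−t)z)` is strictly decreasing on `[0, 1]`.
(Here `‖θ‖` is the sup norm `max_j |θ j|` on `Fin n → ℝ`.) -/
theorem stmt_6 (n m : ℕ) (hn : 1 ≤ n) (hm : 1 ≤ m)
    (W : (Fin n → ℝ) → (Fin m → ℝ) → ℝ)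
    (hW : ∀ θ z, W θ z = (∏ j, Real.cos (θ j / 2) ^ 2) + ∑ j, (z j) ^ 2)
    (θ : Fin n → ℝ) (hθ : θ ≠ 0) (hθπ : ∀ j, |θ j| ≤ Real.pi)
    (z : Fin m → ℝ) (hpos : 0 < W θ z)
    (t₀ t₁ : ℝ) (ht₀ : 0 ≤ t₀) (ht : t₀ < t₁) (ht₁ : t₁ ≤ 1) :
    W (fun j => (1 + t₁ * (Real.pi / ‖θ‖ - 1)) * θ j) (fun j => (1 - t₁) * z j)
      < W (fun j => (1 + t₀ * (Real.pi / ‖θ‖ - 1)) * θ j) (fun j => (1 - t₀) * z j) := by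
  have hπ := Real.pi_pos
  have hNpos : (0:ℝ) < ‖θ‖ := norm_pos_iff.mpr hθ
  have habs : ∀ j, |θ j| ≤ ‖θ‖ := fun j => by
    simpa [Real.norm_eq_abs] using norm_le_pi_norm θ j
  have hNle : ‖θ‖ ≤ Real.pi := by
    rw [pi_norm_le_iff_of_nonneg hπ.le]
    intro j; simpa [Real.norm_eq_abs] using hθπ j
  simp only [hW]
  set N := ‖θ‖ with hNdef
  set s₀ := 1 + t₀ * (Real.pi / N - 1) with hs0
  set s₁ := 1 + t₁ * (Real.pi / N - 1) with hs1
  clear_value N s₀ s₁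
  have hratio : (1:ℝ) ≤ Real.pi / N := (one_le_div hNpos).mpr hNle
  have hgap : (0:ℝ) ≤ Real.pi / N - 1 := by linarith
  have hs₀1 : 1 ≤ s₀ := by
    rw [hs0]; nlinarith [mul_nonneg ht₀ hgap]
  have hs₁1 : 1 ≤ s₁ := by
    rw [hs1]; nlinarith [mul_nonneg (le_trans ht₀ ht.le) hgap]
  have hs01 : s₀ ≤ s₁ := by
    rw [hs0, hs1]; nlinarith [mul_nonneg (sub_nonneg.mpr ht.le) hgap]
  have hsmul : ∀ t : ℝ, (1 + t * (Real.pi / N - 1)) * N = N + t * (Real.pi - N) := by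
    intro t; field_simp
  have hs₁N : s₁ * N ≤ Real.pi := by
    rw [hs1, hsmul]; nlinarith [mul_nonneg (le_trans ht₀ ht.le) (sub_nonneg.mpr hNle)]
  have hs₀N : s₀ * N ≤ Real.pi := by
    calc s₀ * N ≤ s₁ * N := mul_le_mul_of_nonneg_right hs01 hNpos.le
    _ ≤ Real.pi := hs₁N
  -- rewrite cosines via absolute values
  have hcosabs : ∀ (s : ℝ), 0 ≤ s → ∀ j, Real.cos (s * θ j / 2) = Real.cos (s * |θ j| / 2) := by
    intro s hs j
    have h : |s * θ j / 2| = s * |θ j| / 2 := by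
      rw [abs_div, abs_mul, abs_of_nonneg hs, abs_two]
    rw [← Real.cos_abs (s * θ j / 2), h]
  -- nonstrict factor inequality
  have hfac : ∀ a b : ℝ, 0 ≤ a → a ≤ b → b ≤ Real.pi →
      Real.cos (b/2) ^ 2 ≤ Real.cos (a/2) ^ 2 := by
    intro a b ha hab hb
    have h1 : Real.cos (b/2) ≤ Real.cos (a/2) :=
      Real.cos_le_cos_of_nonneg_of_le_pi (by linarith) (by linarith) (by linarith)
    have h2 : 0 ≤ Real.cos (b/2) :=
      Real.cos_nonneg_of_mem_Icc ⟨by linarith, by linarith⟩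
    exact pow_le_pow_left₀ h2 h1 2
  have hbdd : ∀ j, s₁ * |θ j| ≤ Real.pi := fun j =>
    le_trans (mul_le_mul_of_nonneg_left (habs j) (by linarith)) hs₁N
  have hmono : ∀ j, s₀ * |θ j| ≤ s₁ * |θ j| := fun j =>
    mul_le_mul_of_nonneg_right hs01 (abs_nonneg _)
  have hnn : ∀ j, 0 ≤ s₀ * |θ j| := fun j =>
    mul_nonneg (by linarith) (abs_nonneg _)
  have hP : (∏ j, Real.cos (s₁ * θ j / 2) ^ 2) ≤ ∏ j, Real.cos (s₀ * θ j / 2) ^ 2 := by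
    apply Finset.prod_le_prod
    · intro j _; positivity
    · intro j _
      rw [hcosabs s₀ (by linarith) j, hcosabs s₁ (by linarith) j]
      exact hfac _ _ (hnn j) (hmono j) (hbdd j)
  have hZsum : ∀ t : ℝ, (∑ j, ((1 - t) * z j) ^ 2) = (1 - t)^2 * ∑ j, (z j)^2 := by
    intro t; rw [Finset.mul_sum]; congr 1; ext j; ring
  rcases eq_or_lt_of_le (Finset.sum_nonneg (s := Finset.univ)
      (fun j (_ : j ∈ Finset.univ) => sq_nonneg (z j))) with hz | hz
  · -- ∑ z² = 0 : product part must strictly decrease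
    have hprodpos : 0 < ∏ j, Real.cos (θ j / 2) ^ 2 := by
      have h := hpos; rw [hW] at h; rw [← hz] at h; linarith
    obtain ⟨j₀, -, hj₀⟩ := Finset.exists_max_image Finset.univ (fun j => |θ j|)
      ⟨⟨0, hn⟩, Finset.mem_univ _⟩
    have hj₀N : |θ j₀| = N := by
      refine le_antisymm (habs j₀) ?_
      rw [hNdef, pi_norm_le_iff_of_nonneg (abs_nonneg _)]
      intro j; simpa [Real.norm_eq_abs] using hj₀ j (Finset.mem_univ j)
    have hNlt : N < Real.pi := by
      rcases lt_or_eq_of_le hNle with h | h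
      · exact h
      · exfalso
        have hc : Real.cos (θ j₀ / 2) = 0 := by
          have h1 := hcosabs 1 zero_le_one j₀
          simp only [one_mul] at h1
          rw [h1, hj₀N, h, Real.cos_pi_div_two]
        have h0 : (∏ j, Real.cos (θ j / 2) ^ 2) = 0 :=
          Finset.prod_eq_zero (Finset.mem_univ j₀) (by rw [hc]; ring)
        rw [h0] at hprodpos; exact lt_irrefl _ hprodpos
    have ht₀1 : t₀ < 1 := lt_of_lt_of_le ht ht₁
    have hs₀Nlt : s₀ * N < Real.pi := by
      have h1 : t₀ * (Real.pi - N) < 1 * (Real.pi - N) :=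
        mul_lt_mul_of_pos_right ht₀1 (by linarith)
      rw [hs0, hsmul]; linarith
    have hg : 0 < Real.pi / N - 1 := by
      rw [sub_pos, lt_div_iff₀ hNpos, one_mul]; exact hNlt
    have hs₀lt : s₀ < s₁ := by
      have h2 : t₀ * (Real.pi / N - 1) < t₁ * (Real.pi / N - 1) :=
        mul_lt_mul_of_pos_right ht hg
      rw [hs0, hs1]; linarith
    -- positivity of s₀-side factors
    have hgpos : ∀ j, 0 < Real.cos (s₀ * θ j / 2) ^ 2 := by
      intro j
      rw [hcosabs s₀ (by linarith) j]
      have harg : s₀ * |θ j| < Real.pi := by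
        calc s₀ * |θ j| ≤ s₀ * N := mul_le_mul_of_nonneg_left (habs j) (by linarith)
        _ < Real.pi := hs₀Nlt
      have hc : 0 < Real.cos (s₀ * |θ j| / 2) := by
        apply Real.cos_pos_of_mem_Ioo
        constructor
        · have := hnn j; linarith
        · linarith
      positivity
    -- strict inequality at j₀
    have hj₀strict : Real.cos (s₁ * θ j₀ / 2) ^ 2 < Real.cos (s₀ * θ j₀ / 2) ^ 2 := by
      rw [hcosabs s₀ (by linarith) j₀, hcosabs s₁ (by linarith) j₀, hj₀N]
      have hab : s₀ * N < s₁ * N := mul_lt_mul_of_pos_right hs₀lt hNpos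
      have h1 : Real.cos (s₁ * N / 2) < Real.cos (s₀ * N / 2) := by
        apply Real.cos_lt_cos_of_nonneg_of_le_pi
        · have : 0 ≤ s₀ * N := by positivity
          linarith
        · linarith
        · linarith
      have h2 : 0 ≤ Real.cos (s₁ * N / 2) := by
        apply Real.cos_nonneg_of_mem_Icc
        constructor
        · have : 0 ≤ s₁ * N := by positivity
          linarith
        · linarith
      exact pow_lt_pow_left₀ h1 h2 two_ne_zero
    have hPstrict : (∏ j, Real.cos (s₁ * θ j / 2) ^ 2)
        < ∏ j, Real.cos (s₀ * θ j / 2) ^ 2 := by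
      have hdec1 : (∏ j, Real.cos (s₁ * θ j / 2) ^ 2)
          = Real.cos (s₁ * θ j₀ / 2) ^ 2 * ∏ j ∈ Finset.univ.erase j₀, Real.cos (s₁ * θ j / 2) ^ 2 :=
        (Finset.mul_prod_erase Finset.univ _ (Finset.mem_univ j₀)).symm
      have hdec0 : (∏ j, Real.cos (s₀ * θ j / 2) ^ 2)
          = Real.cos (s₀ * θ j₀ / 2) ^ 2 * ∏ j ∈ Finset.univ.erase j₀, Real.cos (s₀ * θ j / 2) ^ 2 :=
        (Finset.mul_prod_erase Finset.univ _ (Finset.mem_univ j₀)).symm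
      have hErase : (∏ j ∈ Finset.univ.erase j₀, Real.cos (s₁ * θ j / 2) ^ 2)
          ≤ ∏ j ∈ Finset.univ.erase j₀, Real.cos (s₀ * θ j / 2) ^ 2 := by
        apply Finset.prod_le_prod
        · intro j _; positivity
        · intro j _
          rw [hcosabs s₀ (by linarith) j, hcosabs s₁ (by linarith) j]
          exact hfac _ _ (hnn j) (hmono j) (hbdd j)
      have hErasePos : 0 < ∏ j ∈ Finset.univ.erase j₀, Real.cos (s₀ * θ j / 2) ^ 2 :=
        Finset.prod_pos fun j _ => hgpos j
      rw [hdec1, hdec0]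
      calc Real.cos (s₁ * θ j₀ / 2) ^ 2 * ∏ j ∈ Finset.univ.erase j₀, Real.cos (s₁ * θ j / 2) ^ 2
          ≤ Real.cos (s₁ * θ j₀ / 2) ^ 2 * ∏ j ∈ Finset.univ.erase j₀, Real.cos (s₀ * θ j / 2) ^ 2 := by
            apply mul_le_mul_of_nonneg_left hErase (by positivity)
        _ < Real.cos (s₀ * θ j₀ / 2) ^ 2 * ∏ j ∈ Finset.univ.erase j₀, Real.cos (s₀ * θ j / 2) ^ 2 :=
            mul_lt_mul_of_pos_right hj₀strict hErasePos
    have hZeq : ∀ t : ℝ, (∑ j, ((1 - t) * z j) ^ 2) = 0 := by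
      intro t; rw [hZsum, ← hz, mul_zero]
    rw [hZeq t₀, hZeq t₁]
    simpa using hPstrict
  · -- ∑ z² > 0 : z part strictly decreases
    have hZlt : (∑ j, ((1 - t₁) * z j) ^ 2) < ∑ j, ((1 - t₀) * z j) ^ 2 := by
      rw [hZsum, hZsum]
      have h1 : (1 - t₁)^2 < (1 - t₀)^2 :=
        pow_lt_pow_left₀ (by linarith) (by linarith) two_ne_zero
      exact mul_lt_mul_of_pos_right h1 hz
    exact add_lt_add_of_le_of_lt hP hZlt
end

section
/- Let n, m ≥ 1 and λ ∈ (0, 1). Set A := V⁻¹([0, λ]) = {p : V(p) ≤ λ} and N₀ := V⁻¹({0}), both with the subspace topology. Then N₀ is a strong deformation retract of A: there exists a continuous map H : [0, 1] × A → A such that H(0, a) = a for all a ∈ A, V(H(1, a)) = 0 for all a ∈ A, and H(t, a) = a for all t ∈ [0, 1] and all a ∈ A with V(a) = 0. -/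
open Real

noncomputable section Stmt7Aux

namespace Stmt7Aux

/-- The norm of an angle is the absolute value of its representative in `(-π, π]`. -/
lemma norm_angle (θ : Real.Angle) : ‖θ‖ = |θ.toReal| := by
  conv_lhs => rw [← θ.coe_toReal]
  refine (AddCircle.norm_coe_eq_abs_iff (2 * π) (by positivity)).2 ?_
  rw [abs_of_pos Real.two_pi_pos]
  linarith [θ.abs_toReal_le_pi]

lemma norm_angle_coe_le (r : ℝ) : ‖((r : ℝ) : Real.Angle)‖ ≤ |r| := by
  exact (QuotientAddGroup.norm_mk_le_norm (S := AddSubgroup.zmultiples (2 * π)) (m := r)).trans_eq (Real.norm_eq_abs r)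

lemma continuousAt_toReal {θ : Real.Angle} (h : θ ≠ ((π : ℝ) : Real.Angle)) :
    ContinuousAt Real.Angle.toReal θ := by
  induction θ using Real.Angle.induction_on with
  | _ x =>
    have hx : ((x : ℝ) : ℝ ⧸ AddSubgroup.zmultiples (2 * π)) ≠ ((-π : ℝ) : ℝ ⧸ AddSubgroup.zmultiples (2 * π)) := by
      intro hc
      apply h
      rw [← Real.Angle.neg_coe_pi]
      exact hc
    rw [ContinuousAt, Filter.Tendsto]
    erw [QuotientAddGroup.nhds_eq]
    erw [Filter.map_map]
    exact continuousAt_toIocMod Real.two_pi_pos (-π) (AddCommGroup.not_modEq_iff_ne_mod_zmultiples.2 hx)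

lemma neg_one_le_cosA (θ : Real.Angle) : -1 ≤ θ.cos := by
  rw [← θ.coe_toReal, Real.Angle.cos_coe]
  exact Real.neg_one_le_cos _

lemma cosA_le_one (θ : Real.Angle) : θ.cos ≤ 1 := by
  rw [← θ.coe_toReal, Real.Angle.cos_coe]
  exact Real.cos_le_one _

lemma abs_toReal_eq_pi_of_cos_eq_neg_one {θ : Real.Angle} (h : θ.cos = -1) :
    |θ.toReal| = π := by
  by_contra hne
  have hlt : |θ.toReal| < π := lt_of_le_of_ne θ.abs_toReal_le_pi hne
  have hcc : Real.cos π < Real.cos |θ.toReal| :=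
    Real.cos_lt_cos_of_nonneg_of_le_pi (abs_nonneg _) le_rfl hlt
  rw [Real.cos_pi, Real.cos_abs] at hcc
  rw [← θ.coe_toReal, Real.Angle.cos_coe] at h
  linarith

variable {n m : ℕ}

/-- The potential. -/
def W (n m : ℕ) (p : (Fin n → Real.Angle) × EuclideanSpace ℝ (Fin m)) : ℝ :=
  (∏ j, (1 + Real.Angle.cos (p.1 j)) / 2) + ‖p.2‖ ^ 2

lemma W_nonneg (p : (Fin n → Real.Angle) × EuclideanSpace ℝ (Fin m)) : 0 ≤ W n m p := by
  have h1 : (0 : ℝ) ≤ ∏ j, (1 + Real.Angle.cos (p.1 j)) / 2 :=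
    Finset.prod_nonneg fun j _ => by linarith [neg_one_le_cosA (p.1 j)]
  have h2 : (0 : ℝ) ≤ ‖p.2‖ ^ 2 := by positivity
  simp only [W]; linarith

/-- The radius function: maximal coordinate norm. -/
def rad (hne : (Finset.univ : Finset (Fin n)).Nonempty) (x : Fin n → Real.Angle) : ℝ :=
  Finset.univ.sup' hne fun j => ‖x j‖

lemma norm_le_rad (hne : (Finset.univ : Finset (Fin n)).Nonempty) (x : Fin n → Real.Angle)
    (j : Fin n) : ‖x j‖ ≤ rad hne x := by
  show ‖x j‖ ≤ Finset.univ.sup' hne fun j => ‖x j‖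
  exact Finset.le_sup' (fun j => ‖x j‖) (Finset.mem_univ j)

lemma rad_le_pi (hne : (Finset.univ : Finset (Fin n)).Nonempty) (x : Fin n → Real.Angle) :
    rad hne x ≤ π :=
  Finset.sup'_le _ _ fun j _ => by rw [norm_angle]; exact (x j).abs_toReal_le_pi

lemma exists_rad (hne : (Finset.univ : Finset (Fin n)).Nonempty) (x : Fin n → Real.Angle) :
    ∃ j, ‖x j‖ = rad hne x := by
  obtain ⟨j, -, hj⟩ := Finset.exists_mem_eq_sup' hne fun j => ‖x j‖
  exact ⟨j, hj.symm⟩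

lemma rad_continuous (hne : (Finset.univ : Finset (Fin n)).Nonempty) :
    Continuous (rad hne) := by
  refine continuous_iff_continuousAt.2 fun x => ?_
  exact ContinuousAt.finset_sup'_apply hne fun j _ => ((continuous_apply j).norm).continuousAt

lemma rad_pos (hne : (Finset.univ : Finset (Fin n)).Nonempty)
    {p : (Fin n → Real.Angle) × EuclideanSpace ℝ (Fin m)} (hp : W n m p < 1) :
    0 < rad hne p.1 := by
  rcases lt_or_ge 0 (rad hne p.1) with h | h
  · exact h
  · exfalso
    have hz : ∀ j, p.1 j = 0 := by
      intro j
      have h1 : ‖p.1 j‖ ≤ 0 := (norm_le_rad hne p.1 j).trans h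
      simpa [norm_eq_zero] using le_antisymm h1 (norm_nonneg _)
    have hprod : (∏ j, (1 + Real.Angle.cos (p.1 j)) / 2) = 1 := by
      rw [Finset.prod_eq_one]
      intro j _
      rw [hz j, Real.Angle.cos_zero]
      norm_num
    have h2 : (0 : ℝ) ≤ ‖p.2‖ ^ 2 := by positivity
    simp only [W] at hp
    rw [hprod] at hp
    linarith

/-- The increment applied to coordinate `j`. -/
def g (hne : (Finset.univ : Finset (Fin n)).Nonempty) (t : ℝ) (x : Fin n → Real.Angle)
    (j : Fin n) : ℝ :=
  t * ((x j).toReal / rad hne x) * (π - rad hne x)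

/-- The deformation map. -/
def defm (hne : (Finset.univ : Finset (Fin n)).Nonempty) (t : ℝ)
    (p : (Fin n → Real.Angle) × EuclideanSpace ℝ (Fin m)) :
    (Fin n → Real.Angle) × EuclideanSpace ℝ (Fin m) :=
  (fun j => p.1 j + ((g hne t p.1 j : ℝ) : Real.Angle), (1 - t) • p.2)

section Facts

variable (hne : (Finset.univ : Finset (Fin n)).Nonempty)

lemma cos_add_g (t : ℝ) (x : Fin n → Real.Angle) (j : Fin n) :
    Real.Angle.cos (x j + ((g hne t x j : ℝ) : Real.Angle)) =
      Real.cos ((x j).toReal + g hne t x j) := by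
  conv_lhs => rw [← (x j).coe_toReal, ← Real.Angle.coe_add]
  rw [Real.Angle.cos_coe]

lemma abs_add_g_le {t : ℝ} (ht0 : 0 ≤ t) (ht1 : t ≤ 1) {x : Fin n → Real.Angle}
    (hr : 0 < rad hne x) (j : Fin n) :
    |(x j).toReal| ≤ |(x j).toReal + g hne t x j| ∧ |(x j).toReal + g hne t x j| ≤ π := by
  set r := rad hne x with hrdef
  set u := (x j).toReal with hudef
  have hur : |u| ≤ r := by rw [← norm_angle]; exact norm_le_rad hne x j
  have hrpi : r ≤ π := rad_le_pi hne x
  have hc1 : (1 : ℝ) ≤ 1 + t * (π - r) / r := by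
    have : 0 ≤ t * (π - r) / r :=
      div_nonneg (mul_nonneg ht0 (by linarith)) hr.le
    linarith
  have heq : u + g hne t x j = u * (1 + t * (π - r) / r) := by
    simp only [g, ← hrdef, ← hudef]
    field_simp
  constructor
  · rw [heq, abs_mul, abs_of_pos (by linarith : (0:ℝ) < 1 + t * (π - r) / r)]
    nlinarith [abs_nonneg u]
  · rw [heq, abs_mul, abs_of_pos (by linarith : (0:ℝ) < 1 + t * (π - r) / r)]
    have h1 : |u| * (1 + t * (π - r) / r) ≤ r * (1 + t * (π - r) / r) := by
      nlinarith
    have h2 : r * (1 + t * (π - r) / r) = r + t * (π - r) := by field_simp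
    nlinarith

lemma cos_defm_le {t : ℝ} (ht0 : 0 ≤ t) (ht1 : t ≤ 1) {x : Fin n → Real.Angle}
    (hr : 0 < rad hne x) (j : Fin n) :
    Real.Angle.cos (x j + ((g hne t x j : ℝ) : Real.Angle)) ≤ Real.Angle.cos (x j) := by
  obtain ⟨h1, h2⟩ := abs_add_g_le hne ht0 ht1 hr j
  rw [cos_add_g]
  conv_rhs => rw [← (x j).coe_toReal, Real.Angle.cos_coe]
  rw [← Real.cos_abs ((x j).toReal + g hne t x j), ← Real.cos_abs (x j).toReal]
  exact Real.cos_le_cos_of_nonneg_of_le_pi (abs_nonneg _) h2 h1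

lemma cos_defm_one {x : Fin n → Real.Angle} (hr : 0 < rad hne x) {j : Fin n}
    (hj : ‖x j‖ = rad hne x) :
    Real.Angle.cos (x j + ((g hne 1 x j : ℝ) : Real.Angle)) = -1 := by
  set r := rad hne x with hrdef
  set u := (x j).toReal with hudef
  have hur : |u| = r := by rw [← norm_angle]; exact hj
  rw [cos_add_g]
  rcases abs_eq (le_of_lt hr) |>.1 hur with h | h
  · have : u + g hne 1 x j = π := by
      simp only [g, ← hudef, ← hrdef, h]
      field_simp
      ring
    rw [this, Real.cos_pi]
  · have : u + g hne 1 x j = -π := by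
      simp only [g, ← hudef, ← hrdef, h]
      field_simp
      ring
    rw [this, Real.cos_neg, Real.cos_pi]

lemma W_defm_le {t : ℝ} (ht0 : 0 ≤ t) (ht1 : t ≤ 1)
    {p : (Fin n → Real.Angle) × EuclideanSpace ℝ (Fin m)} (hr : 0 < rad hne p.1) :
    W n m (defm hne t p) ≤ W n m p := by
  have hprod : (∏ j, (1 + Real.Angle.cos ((defm hne t p).1 j)) / 2) ≤
      ∏ j, (1 + Real.Angle.cos (p.1 j)) / 2 := by
    refine Finset.prod_le_prod (fun j _ => ?_) (fun j _ => ?_)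
    · have := neg_one_le_cosA ((defm hne t p).1 j); linarith
    · have := cos_defm_le hne ht0 ht1 hr j
      simp only [defm] at *
      linarith
  have hnorm : ‖(defm hne t p).2‖ ^ 2 ≤ ‖p.2‖ ^ 2 := by
    have h1 : ‖(defm hne t p).2‖ = |1 - t| * ‖p.2‖ := by
      simp [defm, norm_smul]
    have h2 : |1 - t| ≤ 1 := by rw [abs_le]; constructor <;> linarith
    rw [h1]
    have h3 : |1 - t| * ‖p.2‖ ≤ ‖p.2‖ := by
      nlinarith [norm_nonneg p.2, abs_nonneg (1 - t)]
    nlinarith [norm_nonneg p.2, mul_nonneg (abs_nonneg (1 - t)) (norm_nonneg p.2)]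
  simp only [W]
  exact add_le_add hprod hnorm

lemma W_defm_one {p : (Fin n → Real.Angle) × EuclideanSpace ℝ (Fin m)}
    (hr : 0 < rad hne p.1) : W n m (defm hne 1 p) = 0 := by
  obtain ⟨j, hj⟩ := exists_rad hne p.1
  have hprod : (∏ j, (1 + Real.Angle.cos ((defm hne 1 p).1 j)) / 2) = 0 := by
    refine Finset.prod_eq_zero (Finset.mem_univ j) ?_
    have := cos_defm_one hne hr hj
    simp only [defm]
    rw [this]
    norm_num
  have hz : (defm hne 1 p).2 = 0 := by simp [defm]
  simp only [W]
  rw [hprod, hz]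
  simp

lemma defm_zero (p : (Fin n → Real.Angle) × EuclideanSpace ℝ (Fin m)) :
    defm hne 0 p = p := by
  refine Prod.ext ?_ ?_
  · funext j
    simp [defm, g]
  · simp [defm]

lemma defm_fixed {p : (Fin n → Real.Angle) × EuclideanSpace ℝ (Fin m)}
    (hp : W n m p = 0) (t : ℝ) : defm hne t p = p := by
  have hprodnn : (0 : ℝ) ≤ ∏ j, (1 + Real.Angle.cos (p.1 j)) / 2 :=
    Finset.prod_nonneg fun j _ => by linarith [neg_one_le_cosA (p.1 j)]
  have hz2 : (0 : ℝ) ≤ ‖p.2‖ ^ 2 := by positivity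
  simp only [W] at hp
  have hprod : (∏ j, (1 + Real.Angle.cos (p.1 j)) / 2) = 0 := by linarith
  have hznorm : ‖p.2‖ ^ 2 = 0 := by linarith
  have hz : p.2 = 0 := by
    have : ‖p.2‖ = 0 := by nlinarith [norm_nonneg p.2]
    simpa [norm_eq_zero] using this
  obtain ⟨j, -, hj⟩ := Finset.prod_eq_zero_iff.1 hprod
  have hcos : Real.Angle.cos (p.1 j) = -1 := by linarith
  have habs : |(p.1 j).toReal| = π := abs_toReal_eq_pi_of_cos_eq_neg_one hcos
  have hrad : rad hne p.1 = π := by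
    refine le_antisymm (rad_le_pi hne p.1) ?_
    calc π = ‖p.1 j‖ := by rw [norm_angle, habs]
    _ ≤ rad hne p.1 := norm_le_rad hne p.1 j
  refine Prod.ext ?_ ?_
  · funext k
    have : g hne t p.1 k = 0 := by simp only [g]; rw [hrad]; ring
    simp [defm, this]
  · simp [defm, hz]

lemma defm_continuous (S : Set ((Fin n → Real.Angle) × EuclideanSpace ℝ (Fin m)))
    (hS : ∀ p ∈ S, 0 < rad hne p.1) :
    Continuous (fun q : (Set.Icc (0 : ℝ) 1) × S => defm hne (q.1 : ℝ) q.2.1) := by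
  have hT : Continuous fun q : (Set.Icc (0 : ℝ) 1) × S => (q.1 : ℝ) :=
    continuous_subtype_val.comp continuous_fst
  have hX : Continuous fun q : (Set.Icc (0 : ℝ) 1) × S => (q.2.1 :
      (Fin n → Real.Angle) × EuclideanSpace ℝ (Fin m)).1 :=
    continuous_fst.comp (continuous_subtype_val.comp continuous_snd)
  have hZ : Continuous fun q : (Set.Icc (0 : ℝ) 1) × S => (q.2.1 :
      (Fin n → Real.Angle) × EuclideanSpace ℝ (Fin m)).2 :=
    continuous_snd.comp (continuous_subtype_val.comp continuous_snd)
  refine Continuous.prodMk ?_ ?_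
  · -- angle part
    refine continuous_pi fun j => ?_
    have hXj : Continuous fun q : (Set.Icc (0 : ℝ) 1) × S =>
        (q.2.1 : (Fin n → Real.Angle) × EuclideanSpace ℝ (Fin m)).1 j :=
      (continuous_apply j).comp hX
    have hrad : Continuous fun q : (Set.Icc (0 : ℝ) 1) × S =>
        rad hne (q.2.1 : (Fin n → Real.Angle) × EuclideanSpace ℝ (Fin m)).1 :=
      (rad_continuous hne).comp hX
    refine continuous_iff_continuousAt.2 fun q₀ => ?_
    set X := fun q : (Set.Icc (0 : ℝ) 1) × S =>
      (q.2.1 : (Fin n → Real.Angle) × EuclideanSpace ℝ (Fin m)).1 with hXdef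
    by_cases hpi : X q₀ j = ((π : ℝ) : Real.Angle)
    · -- the delicate case: squeeze
      have hradq0 : rad hne (X q₀) = π := by
        refine le_antisymm (rad_le_pi hne _) ?_
        calc π = ‖X q₀ j‖ := by
              rw [hpi, norm_angle]
              rw [Real.Angle.toReal_pi, abs_of_pos Real.pi_pos]
        _ ≤ rad hne (X q₀) := norm_le_rad hne _ j
      have hbound : ∀ q : (Set.Icc (0 : ℝ) 1) × S,
          ‖((g hne (q.1 : ℝ) (X q) j : ℝ) : Real.Angle)‖ ≤ π - rad hne (X q) := by
        intro q
        refine (norm_angle_coe_le _).trans ?_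
        have hr := hS _ q.2.2
        have hrq : 0 < rad hne (X q) := hr
        have hrpi : rad hne (X q) ≤ π := rad_le_pi hne _
        have ht0 : (0 : ℝ) ≤ (q.1 : ℝ) := q.1.2.1
        have ht1 : (q.1 : ℝ) ≤ 1 := q.1.2.2
        have hu : |(X q j).toReal| ≤ rad hne (X q) := by
          rw [← norm_angle]; exact norm_le_rad hne _ j
        simp only [g]
        rw [abs_mul, abs_mul, abs_div]
        have h1 : |(q.1 : ℝ)| ≤ 1 := by rw [abs_of_nonneg ht0]; exact ht1
        have h2 : |(X q j).toReal| / |rad hne (X q)| ≤ 1 := by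
          rw [abs_of_pos hrq]
          exact div_le_one_of_le₀ hu (le_of_lt hrq)
        have h3 : |π - rad hne (X q)| = π - rad hne (X q) := abs_of_nonneg (by linarith)
        rw [h3]
        have hd : 0 ≤ |(X q j).toReal| / |rad hne (X q)| := by positivity
        have hc : 0 ≤ π - rad hne (X q) := by linarith
        have hab : |(q.1:ℝ)| * (|(X q j).toReal| / |rad hne (X q)|) ≤ 1 := by
          nlinarith [abs_nonneg ((q.1 : ℝ))]
        nlinarith [mul_nonneg (abs_nonneg ((q.1 : ℝ))) hd]
      have htend0 : Filter.Tendsto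
          (fun q : (Set.Icc (0 : ℝ) 1) × S => π - rad hne (X q)) (nhds q₀) (nhds 0) := by
        have hc : Continuous (fun q : (Set.Icc (0 : ℝ) 1) × S => π - rad hne (X q)) :=
          continuous_const.sub hrad
        have h2 := hc.tendsto q₀
        rw [show rad hne (X q₀) = π from hradq0, sub_self] at h2
        exact h2
      have hg0 : Filter.Tendsto
          (fun q : (Set.Icc (0 : ℝ) 1) × S => ((g hne (q.1 : ℝ) (X q) j : ℝ) : Real.Angle))
          (nhds q₀) (nhds 0) :=
        squeeze_zero_norm hbound htend0
      have hXj0 : Filter.Tendsto (fun q => X q j) (nhds q₀) (nhds (X q₀ j)) :=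
        hXj.tendsto q₀
      have hsum := hXj0.add hg0
      rw [add_zero] at hsum
      have hval : X q₀ j + ((g hne ((q₀.1 : ℝ)) (X q₀) j : ℝ) : Real.Angle) = X q₀ j := by
        have : g hne ((q₀.1 : ℝ)) (X q₀) j = 0 := by simp only [g]; rw [hradq0]; ring
        rw [this]
        simp
      have hfinal : Filter.Tendsto
          (fun x => X x j + ((g hne ((x.1 : ℝ)) (X x) j : ℝ) : Real.Angle)) (nhds q₀)
          (nhds (X q₀ j + ((g hne ((q₀.1 : ℝ)) (X q₀) j : ℝ) : Real.Angle))) := by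
        rw [hval]
        exact hsum
      exact hfinal
    · -- easy case: everything continuous at q₀
      have hr : 0 < rad hne (X q₀) := hS _ q₀.2.2
      have hXjq : ContinuousAt (fun q : (Set.Icc (0 : ℝ) 1) × S => X q j) q₀ :=
        hXj.continuousAt
      have htoReal : ContinuousAt (fun q => (X q j).toReal) q₀ :=
        ContinuousAt.comp (g := Real.Angle.toReal) (f := fun q => X q j) (x := q₀)
          (continuousAt_toReal hpi) hXjq
      have hg : ContinuousAt
          (fun q : (Set.Icc (0 : ℝ) 1) × S => g hne (q.1 : ℝ) (X q) j) q₀ := by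
        simp only [g]
        exact ((hT.continuousAt.mul (htoReal.div hrad.continuousAt hr.ne')).mul
          (continuousAt_const.sub hrad.continuousAt))
      exact hXj.continuousAt.add ((Real.Angle.continuous_coe.continuousAt).comp hg)
  · -- euclidean part
    exact (continuous_const.sub hT).smul hZ

end Facts

end Stmt7Aux

end Stmt7Aux

open Stmt7Aux in
/-- Let `V(x, z) = ∏ⱼ (1 + cos xⱼ)/2 + ‖z‖²` on `𝕋ⁿ × ℝᵐ` with `𝕋 = ℝ/2πℤ`.
For `λ ∈ (0, 1)`, the zero set `N₀ = V⁻¹({0})` is a strong deformation retract of the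
sublevel set `A = V⁻¹([0, λ])`. -/
theorem stmt_7 (n m : ℕ) (hn : 1 ≤ n) (hm : 1 ≤ m) (lam : ℝ) (hlam0 : 0 < lam) (hlam1 : lam < 1)
    (V : (Fin n → Real.Angle) × (EuclideanSpace ℝ (Fin m)) → ℝ)
    (hV : ∀ p, V p = (∏ j, (1 + Real.Angle.cos (p.1 j)) / 2) + ‖p.2‖ ^ 2) :
    ∃ H : (Set.Icc (0 : ℝ) 1) × (V ⁻¹' Set.Icc 0 lam) → (V ⁻¹' Set.Icc 0 lam),
      Continuous H ∧
      (∀ a, H (⟨0, by norm_num⟩, a) = a) ∧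
      (∀ a, V (H (⟨1, by norm_num⟩, a)).1 = 0) ∧
      (∀ t a, V a.1 = 0 → H (t, a) = a) := by
  have hVW : V = W n m := funext hV
  subst hVW
  have hι : Nonempty (Fin n) := ⟨⟨0, hn⟩⟩
  have hne : (Finset.univ : Finset (Fin n)).Nonempty := Finset.univ_nonempty
  have hrpos : ∀ p ∈ (W n m ⁻¹' Set.Icc 0 lam), 0 < rad hne p.1 := by
    intro p hp
    exact rad_pos hne (lt_of_le_of_lt hp.2 hlam1)
  have hmem : ∀ (q : (Set.Icc (0 : ℝ) 1) × (W n m ⁻¹' Set.Icc 0 lam)),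
      defm hne (q.1 : ℝ) q.2.1 ∈ W n m ⁻¹' Set.Icc 0 lam := by
    intro q
    constructor
    · exact W_nonneg _
    · exact (W_defm_le hne q.1.2.1 q.1.2.2 (hrpos _ q.2.2)).trans q.2.2.2
  refine ⟨fun q => ⟨defm hne (q.1 : ℝ) q.2.1, hmem q⟩, ?_, ?_, ?_, ?_⟩
  · exact ((defm_continuous hne _ hrpos).subtype_mk _)
  · intro a
    apply Subtype.ext
    exact defm_zero hne _
  · intro a
    exact W_defm_one hne (hrpos _ a.2)
  · intro t a ha
    apply Subtype.ext
    exact defm_fixed hne ha _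
end

section
/- Let n, m ≥ 1 and λ ∈ (0, 1). Set A' := V⁻¹((0, λ]) = {p : 0 < V(p) ≤ λ} and N_λ := V⁻¹({λ}), both with the subspace topology. Then N_λ is a strong deformation retract of A': there exists a continuous map H : [0, 1] × A' → A' such that H(0, a) = a for all a ∈ A', V(H(1, a)) = λ for all a ∈ A', and H(t, a) = a for all t ∈ [0, 1] and all a ∈ A' with V(a) = λ. -/
open Real Filter Topology

noncomputable def angMap (s : ℝ) (θ : Real.Angle) : Real.Angle :=
  ((Real.sign θ.toReal * (2 * Real.arccos (Real.sqrt ((1 + θ.cos) / 2) ^ s))) : ℝ)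

lemma sqrt_half_eq (θ : Real.Angle) :
    Real.sqrt ((1 + θ.cos) / 2) = Real.cos (θ.toReal / 2) := by
  have h1 := Real.Angle.neg_pi_lt_toReal θ
  have h2 := Real.Angle.toReal_le_pi θ
  have hcos : θ.cos = Real.cos θ.toReal := by
    conv_lhs => rw [← Real.Angle.coe_toReal θ]
    exact Real.Angle.cos_coe _
  rw [hcos, ← Real.cos_half (by linarith) h2]

lemma angMap_pi {s : ℝ} (hs : s ≠ 0) : angMap s (π : Real.Angle) = (π : Real.Angle) := by
  rw [angMap, Real.Angle.toReal_pi, Real.sign_of_pos Real.pi_pos]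
  rw [Real.Angle.cos_coe_pi]
  norm_num
  rw [Real.zero_rpow hs, Real.arccos_zero]
  norm_num
  congr 1
  ring

lemma angMap_zero (s : ℝ) : angMap s (0 : Real.Angle) = 0 := by
  rw [angMap, Real.Angle.toReal_zero, Real.sign_zero, zero_mul]
  rfl

lemma arccos_anti' {a b : ℝ} (hab : a ≤ b) : Real.arccos b ≤ Real.arccos a := by
  rw [Real.arccos, Real.arccos]
  have := Real.monotone_arcsin hab
  linarith

lemma arccos_cos_half_abs (θ : Real.Angle) :
    Real.arccos (Real.cos (θ.toReal / 2)) = |θ.toReal| / 2 := by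
  have h1 := Real.Angle.neg_pi_lt_toReal θ
  have h2 := Real.Angle.toReal_le_pi θ
  have hpi := Real.pi_pos
  rcases le_or_gt 0 θ.toReal with h | h
  · rw [Real.arccos_cos (by linarith) (by linarith), abs_of_nonneg h]
  · rw [← Real.cos_neg, Real.arccos_cos (by linarith) (by linarith), abs_of_neg h]
    ring

lemma myContAt_toReal' {θ : Real.Angle} (h : θ ≠ (π : Real.Angle)) :
    ContinuousAt Real.Angle.toReal θ := by
  induction θ using QuotientAddGroup.induction_on with
  | H y =>
    unfold ContinuousAt
    erw [Filter.Tendsto, QuotientAddGroup.nhds_eq, Filter.map_map]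
    apply continuousAt_toIocMod Real.two_pi_pos (-π)
    intro hy
    apply h
    have h2 : ((π:ℝ) : Real.Angle) = ((-π : ℝ) : Real.Angle) := by
      rw [Real.Angle.coe_neg, Real.Angle.neg_coe_pi]
    rw [h2]
    exact_mod_cast (AddCommGroup.modEq_iff_eq_mod_zmultiples.mp hy)

lemma tendsto_of_eventually_or' {α β : Type*} [TopologicalSpace β] {l : Filter α}
    {f g h : α → β} {c : β} (H : ∀ᶠ x in l, f x = g x ∨ f x = h x)
    (hg : Tendsto g l (𝓝 c)) (hh : Tendsto h l (𝓝 c)) : Tendsto f l (𝓝 c) := by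
  rw [Filter.tendsto_def] at hg hh ⊢
  intro U hU
  filter_upwards [H, hg U hU, hh U hU] with x hx hgx hhx
  rcases hx with hx | hx <;> · rw [Set.mem_preimage, hx]; assumption

lemma angMap_continuousAt {α : Type*} [TopologicalSpace α] {f : α → ℝ} {x : α → Real.Angle}
    {a₀ : α} (hf : ContinuousAt f a₀) (hx : ContinuousAt x a₀)
    (h0 : 0 < f a₀) (h1 : ∀ a, f a ≤ 1) :
    ContinuousAt (fun a => angMap (f a) (x a)) a₀ := by
  -- the continuous "magnitude" part
  set c : α → ℝ := fun a => Real.sqrt ((1 + (x a).cos) / 2) with hcdef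
  have hccont : ContinuousAt c a₀ := by
    apply Real.continuous_sqrt.continuousAt.comp
    exact (continuousAt_const.add (Real.Angle.continuous_cos.continuousAt.comp hx)).div_const 2
  set A : α → ℝ := fun a => 2 * Real.arccos (c a ^ f a) with hAdef
  have hAcont : ContinuousAt A a₀ := by
    apply ContinuousAt.mul continuousAt_const
    exact Real.continuous_arccos.continuousAt.comp (hccont.rpow hf (Or.inr h0))
  have hAnonneg : ∀ a, 0 ≤ A a := fun a => by
    have := Real.arccos_nonneg (c a ^ f a); simp only [hAdef]; linarith
  have hform : ∀ a, angMap (f a) (x a) = ((Real.sign (x a).toReal * A a : ℝ) : Real.Angle) :=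
    fun a => rfl
  by_cases hxpi : x a₀ = (π : Real.Angle)
  · -- near an angle π
    rw [ContinuousAt]
    have hApi : Tendsto A (𝓝 a₀) (𝓝 π) := by
      have hA0 : A a₀ = π := by
        simp only [hAdef, hcdef, hxpi, Real.Angle.cos_coe_pi]
        norm_num
        rw [Real.zero_rpow (ne_of_gt h0), Real.arccos_zero]
        ring
      rw [← hA0]; exact hAcont
    have hevne : ∀ᶠ a in 𝓝 a₀, x a ≠ 0 := by
      apply hx.eventually_ne
      rw [hxpi]; exact Real.Angle.pi_ne_zero
    have hvalue : angMap (f a₀) (x a₀) = ((π : ℝ) : Real.Angle) := by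
      rw [hxpi, angMap_pi (ne_of_gt h0)]
    rw [hvalue]
    apply tendsto_of_eventually_or' (g := fun a => ((A a : ℝ) : Real.Angle))
      (h := fun a => ((-A a : ℝ) : Real.Angle))
    · filter_upwards [hevne] with a ha
      have htrne : (x a).toReal ≠ 0 := fun hh => ha (Real.Angle.toReal_eq_zero_iff.mp hh)
      rcases Real.sign_apply_eq_of_ne_zero _ htrne with hs | hs
      · right; rw [hform a, hs]; norm_num
      · left; rw [hform a, hs, one_mul]
    · exact (Real.Angle.continuous_coe.tendsto π).comp hApi
    · have : Tendsto (fun a => -A a) (𝓝 a₀) (𝓝 (-π)) := hApi.neg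
      have h2 := (Real.Angle.continuous_coe.tendsto (-π)).comp this
      rwa [Real.Angle.coe_neg, Real.Angle.neg_coe_pi] at h2
  · -- x a₀ ≠ π : toReal is continuous here
    have htr : ContinuousAt (fun a => (x a).toReal) a₀ := (myContAt_toReal' hxpi).comp hx
    rcases lt_trichotomy ((x a₀).toReal) 0 with hy | hy | hy
    · -- negative side
      have hev : ∀ᶠ a in 𝓝 a₀, (x a).toReal < 0 := htr.eventually (eventually_lt_nhds hy)
      apply ContinuousAt.congr (f := fun a => ((-A a : ℝ) : Real.Angle))
      · exact Real.Angle.continuous_coe.continuousAt.comp hAcont.neg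
      · filter_upwards [hev] with a ha
        rw [hform a, Real.sign_of_neg ha]; norm_num
    · -- zero : squeeze
      have hx0 : x a₀ = 0 := Real.Angle.toReal_eq_zero_iff.mp hy
      rw [ContinuousAt]
      have hvalue : angMap (f a₀) (x a₀) = ((0 : ℝ) : Real.Angle) := by
        rw [hx0, angMap_zero]; rfl
      rw [hvalue]
      have hcpos : ∀ᶠ a in 𝓝 a₀, 0 < c a := by
        apply hccont.eventually (p := fun r => 0 < r)
        have hc0 : c a₀ = 1 := by
          simp only [hcdef, hx0]
          rw [show Real.Angle.cos 0 = 1 from Real.Angle.cos_zero]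
          norm_num
        rw [hc0]
        exact eventually_gt_nhds one_pos
      have hbound : ∀ᶠ a in 𝓝 a₀, |Real.sign (x a).toReal * A a| ≤ |(x a).toReal| := by
        filter_upwards [hcpos] with a ha
        have hc1 : c a ≤ 1 := by
          simp only [hcdef]; rw [sqrt_half_eq (x a)]; exact Real.cos_le_one _
        have hpow : c a ≤ c a ^ f a := by
          have := Real.rpow_le_rpow_of_exponent_ge ha hc1 (h1 a)
          rwa [Real.rpow_one] at this
        have hAa : A a ≤ |(x a).toReal| := by
          have harc : Real.arccos (c a ^ f a) ≤ Real.arccos (c a) := arccos_anti' hpow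
          have : Real.arccos (c a) = |(x a).toReal| / 2 := by
            simp only [hcdef]; rw [sqrt_half_eq (x a)]; exact arccos_cos_half_abs (x a)
          simp only [hAdef]; linarith [harc, this ▸ harc]
        calc |Real.sign (x a).toReal * A a| = |Real.sign (x a).toReal| * |A a| := abs_mul _ _
          _ ≤ 1 * |A a| := by
              apply mul_le_mul_of_nonneg_right _ (abs_nonneg _)
              rcases Real.sign_apply_eq ((x a).toReal) with h | h | h <;> rw [h] <;> norm_num
          _ = A a := by rw [one_mul, abs_of_nonneg (hAnonneg a)]
          _ ≤ |(x a).toReal| := hAa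
      have hgz : Tendsto (fun a => |(x a).toReal|) (𝓝 a₀) (𝓝 0) := by
        have := htr.tendsto.abs
        rwa [hy, abs_zero] at this
      have hr : Tendsto (fun a => Real.sign (x a).toReal * A a) (𝓝 a₀) (𝓝 0) :=
        squeeze_zero_norm' hbound hgz
      have := (Real.Angle.continuous_coe.tendsto 0).comp hr
      exact this
    · -- positive side
      have hev : ∀ᶠ a in 𝓝 a₀, 0 < (x a).toReal := htr.eventually (eventually_gt_nhds hy)
      apply ContinuousAt.congr (f := fun a => ((A a : ℝ) : Real.Angle))
      · exact Real.Angle.continuous_coe.continuousAt.comp hAcont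
      · filter_upwards [hev] with a ha
        rw [hform a, Real.sign_of_pos ha, one_mul]

lemma cos_half_nonneg (θ : Real.Angle) : 0 ≤ Real.cos (θ.toReal / 2) := by
  have h1 := Real.Angle.neg_pi_lt_toReal θ
  have h2 := Real.Angle.toReal_le_pi θ
  have hpi := Real.pi_pos
  exact Real.cos_nonneg_of_mem_Icc ⟨by linarith, by linarith⟩

/-- Key algebraic property: `(1+cos(angMap s θ))/2 = ((1+cos θ)/2)^s`. -/
lemma angMap_cos {s : ℝ} (hs : 0 < s) (θ : Real.Angle) :
    (1 + (angMap s θ).cos) / 2 = ((1 + θ.cos) / 2) ^ s := by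
  have h1 := Real.Angle.neg_pi_lt_toReal θ
  have h2 := Real.Angle.toReal_le_pi θ
  set y := θ.toReal with hy
  set c := Real.cos (y / 2) with hc
  have hc0 : 0 ≤ c := cos_half_nonneg θ
  have hc1 : c ≤ 1 := Real.cos_le_one _
  have hcos : θ.cos = Real.cos y := by
    conv_lhs => rw [← Real.Angle.coe_toReal θ]
    exact Real.Angle.cos_coe _
  have hcosge : (-1:ℝ) ≤ θ.cos := by rw [hcos]; exact Real.neg_one_le_cos y
  have hcsq : c ^ (2:ℕ) = (1 + θ.cos) / 2 := by
    rw [hc, hy, ← sqrt_half_eq θ]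
    exact Real.sq_sqrt (by linarith)
  have hb0 : 0 ≤ c ^ s := Real.rpow_nonneg hc0 s
  have hb1 : c ^ s ≤ 1 := Real.rpow_le_one hc0 hc1 hs.le
  have hkey : Real.cos (2 * Real.arccos (c ^ s)) = 2 * (c ^ s) ^ (2:ℕ) - 1 := by
    rw [Real.cos_two_mul, Real.cos_arccos (by linarith) hb1]
  have hsq : (c ^ s) ^ (2:ℕ) = (c ^ (2:ℕ)) ^ s := by
    rw [← Real.rpow_natCast (c ^ s) 2, ← Real.rpow_natCast c 2,
      ← Real.rpow_mul hc0, ← Real.rpow_mul hc0, mul_comm]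
  have hval : (angMap s θ).cos = 2 * (c ^ s) ^ (2:ℕ) - 1 := by
    rw [angMap, Real.Angle.cos_coe, sqrt_half_eq θ, ← hy, ← hc]
    rcases Real.sign_apply_eq y with h | h | h
    · rw [h]; rw [show (-1 : ℝ) * (2 * Real.arccos (c ^ s)) = -(2 * Real.arccos (c ^ s)) by ring,
        Real.cos_neg, hkey]
    · have hy0 : y = 0 := Real.sign_eq_zero_iff.mp h
      have hcval : c = 1 := by rw [hc, hy0]; simp
      rw [h, hcval, Real.one_rpow]
      simp
      norm_num
    · rw [h, one_mul, hkey]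
  rw [hval, ← hcsq, hsq]
  ring_nf

/-- `angMap 1` is the identity. -/
lemma angMap_one (θ : Real.Angle) : angMap 1 θ = θ := by
  have h1 := Real.Angle.neg_pi_lt_toReal θ
  have h2 := Real.Angle.toReal_le_pi θ
  rw [angMap, sqrt_half_eq θ, Real.rpow_one]
  set y := θ.toReal with hy
  rcases lt_trichotomy y 0 with h | h | h
  · rw [Real.sign_of_neg h]
    have : Real.arccos (Real.cos (y / 2)) = -(y/2) := by
      rw [← Real.cos_neg, Real.arccos_cos (by linarith) (by nlinarith [Real.pi_pos])]
    rw [this]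
    rw [show (-1 : ℝ) * (2 * -(y/2)) = y by ring, hy, Real.Angle.coe_toReal]
  · rw [h, Real.sign_zero, zero_mul]
    have : θ = 0 := Real.Angle.toReal_eq_zero_iff.mp h
    rw [this]; rfl
  · rw [Real.sign_of_pos h]
    rw [Real.arccos_cos (by linarith) (by nlinarith [Real.pi_pos])]
    rw [show (1 : ℝ) * (2 * (y/2)) = y by ring, hy, Real.Angle.coe_toReal]

lemma tendsto_log_inv_zero : Tendsto (fun x : ℝ => (Real.log x)⁻¹) (𝓝 0) (𝓝 0) := by
  have main : Tendsto (fun x : ℝ => (Real.log x)⁻¹) (𝓝[≠] (0:ℝ) ⊔ pure 0) (𝓝 0) := by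
    rw [tendsto_sup]
    constructor
    · have h1 : Tendsto (fun x : ℝ => -Real.log x) (𝓝[≠] (0:ℝ)) atTop :=
        tendsto_neg_atBot_atTop.comp Real.tendsto_log_nhdsNE_zero
      have h2 := h1.inv_tendsto_atTop
      have heq : (fun x : ℝ => (Real.log x)⁻¹) = fun x : ℝ => -((fun y : ℝ => -Real.log y) x)⁻¹ := by
        funext x; rw [inv_neg, neg_neg]
      rw [heq]
      simpa using h2.neg
    · have h0 : (Real.log (0:ℝ))⁻¹ = 0 := by simp
      simpa [h0] using tendsto_pure_nhds (fun x : ℝ => (Real.log x)⁻¹) 0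
  rwa [nhdsNE_sup_pure] at main


section Main

variable (n m : ℕ) (lam : ℝ)
variable (V : (Fin n → Real.Angle) × (EuclideanSpace ℝ (Fin m)) → ℝ)

noncomputable def PfX (p : (Fin n → Real.Angle) × (EuclideanSpace ℝ (Fin m))) : ℝ :=
  ∏ j, (1 + Real.Angle.cos (p.1 j)) / 2

noncomputable def sX (t : ℝ) (p : (Fin n → Real.Angle) × (EuclideanSpace ℝ (Fin m))) : ℝ :=
  1 + t * ((Real.log lam - Real.log (V p)) * (Real.log (PfX n m p))⁻¹)

noncomputable def HX (t : ℝ) (p : (Fin n → Real.Angle) × (EuclideanSpace ℝ (Fin m))) :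
    (Fin n → Real.Angle) × (EuclideanSpace ℝ (Fin m)) :=
  (fun j => angMap (sX n m lam V t p) (p.1 j),
   Real.exp (t * (Real.log lam - Real.log (V p)) / 2) • p.2)

variable {n m lam V}
variable (hV : ∀ p, V p = (∏ j, (1 + Real.Angle.cos (p.1 j)) / 2) + ‖p.2‖ ^ 2)
variable (hlam0 : 0 < lam) (hlam1 : lam < 1)

lemma PfX_nonneg (p) : 0 ≤ PfX n m p := by
  apply Finset.prod_nonneg; intro j _
  have h := Real.neg_one_le_cos ((p.1 j).toReal)
  rw [← Real.Angle.cos_coe, Real.Angle.coe_toReal] at h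
  linarith

include hV in
lemma PfX_le (p) : PfX n m p ≤ V p := by
  rw [hV p]
  have : (0:ℝ) ≤ ‖p.2‖ ^ 2 := by positivity
  simp only [PfX]; linarith

include hV hlam0 hlam1 in
lemma sX_le_one {t p} (ht : t ∈ Set.Icc (0:ℝ) 1) (hp : V p ∈ Set.Ioc 0 lam) :
    sX n m lam V t p ≤ 1 := by
  obtain ⟨hp0, hp1⟩ := hp
  have hnum : 0 ≤ Real.log lam - Real.log (V p) :=
    sub_nonneg.mpr ((Real.log_le_log_iff hp0 hlam0).mpr hp1)
  have hinv : (Real.log (PfX n m p))⁻¹ ≤ 0 := by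
    rcases eq_or_lt_of_le (PfX_nonneg p) with h | h
    · rw [← h, Real.log_zero, inv_zero]
    · have hlt : PfX n m p < 1 := lt_of_le_of_lt (le_trans (PfX_le hV p) hp1) hlam1
      exact inv_nonpos.mpr (Real.log_neg h hlt).le
  have : (Real.log lam - Real.log (V p)) * (Real.log (PfX n m p))⁻¹ ≤ 0 :=
    mul_nonpos_iff.mpr (Or.inl ⟨hnum, hinv⟩)
  have ht0 := ht.1
  rw [sX]
  nlinarith

include hV hlam0 hlam1 in
lemma sX_pos {t p} (ht : t ∈ Set.Icc (0:ℝ) 1) (hp : V p ∈ Set.Ioc 0 lam) :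
    0 < sX n m lam V t p := by
  obtain ⟨hp0, hp1⟩ := hp
  have hnum : 0 ≤ Real.log lam - Real.log (V p) :=
    sub_nonneg.mpr ((Real.log_le_log_iff hp0 hlam0).mpr hp1)
  rcases eq_or_lt_of_le (PfX_nonneg p) with h | h
  · rw [sX, ← h, Real.log_zero, inv_zero, mul_zero, mul_zero]; norm_num
  · have hlt : PfX n m p < 1 := lt_of_le_of_lt (le_trans (PfX_le hV p) hp1) hlam1
    have hlog : Real.log (PfX n m p) < 0 := Real.log_neg h hlt
    have hkey : Real.log (PfX n m p) + t * (Real.log lam - Real.log (V p)) < 0 := by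
      have h1 : t * (Real.log lam - Real.log (V p)) ≤ Real.log lam - Real.log (V p) :=
        mul_le_of_le_one_left hnum ht.2
      have h2 : Real.log (PfX n m p) ≤ Real.log (V p) :=
        (Real.log_le_log_iff h hp0).mpr (PfX_le hV p)
      have h3 : Real.log lam < 0 := Real.log_neg hlam0 hlam1
      linarith
    have heq : sX n m lam V t p =
        (Real.log (PfX n m p) + t * (Real.log lam - Real.log (V p))) * (Real.log (PfX n m p))⁻¹ := by
      rw [sX]; field_simp [hlog.ne]
    rw [heq]
    exact mul_pos_of_neg_of_neg hkey (inv_neg''.mpr hlog)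

include hV hlam0 hlam1 in
lemma HX_val {t p} (ht : t ∈ Set.Icc (0:ℝ) 1) (hp : V p ∈ Set.Ioc 0 lam) :
    V (HX n m lam V t p) = Real.exp (t * (Real.log lam - Real.log (V p))) * V p := by
  obtain ⟨hp0, hp1⟩ := hp
  have hs := sX_pos hV hlam0 hlam1 ht ⟨hp0, hp1⟩
  have hPfH : (∏ j, (1 + Real.Angle.cos ((HX n m lam V t p).1 j)) / 2)
      = (PfX n m p) ^ (sX n m lam V t p) := by
    have h1 : ∀ j : Fin n, (1 + Real.Angle.cos ((HX n m lam V t p).1 j)) / 2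
        = ((1 + Real.Angle.cos (p.1 j)) / 2) ^ (sX n m lam V t p) := by
      intro j
      exact angMap_cos hs (p.1 j)
    rw [Finset.prod_congr rfl (fun j _ => h1 j)]
    rw [Real.finset_prod_rpow _ _ (fun j _ => by
      have h := Real.neg_one_le_cos ((p.1 j).toReal)
      rw [← Real.Angle.cos_coe, Real.Angle.coe_toReal] at h
      linarith) _]
    rfl
  have hrpow : (PfX n m p) ^ (sX n m lam V t p)
      = Real.exp (t * (Real.log lam - Real.log (V p))) * PfX n m p := by
    rcases eq_or_lt_of_le (PfX_nonneg p) with h | h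
    · rw [← h, Real.zero_rpow (ne_of_gt hs), mul_zero]
    · have hlt : PfX n m p < 1 := lt_of_le_of_lt (le_trans (PfX_le hV p) hp1) hlam1
      have hlog : Real.log (PfX n m p) ≠ 0 := ne_of_lt (Real.log_neg h hlt)
      rw [Real.rpow_def_of_pos h]
      have harg : Real.log (PfX n m p) * sX n m lam V t p
          = Real.log (PfX n m p) + t * (Real.log lam - Real.log (V p)) := by
        rw [sX]; field_simp
      rw [harg, Real.exp_add, Real.exp_log h]; ring
  have hz : ‖(HX n m lam V t p).2‖ ^ 2
      = Real.exp (t * (Real.log lam - Real.log (V p))) * ‖p.2‖ ^ 2 := by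
    show ‖Real.exp (t * (Real.log lam - Real.log (V p)) / 2) • p.2‖ ^ 2 = _
    rw [norm_smul, Real.norm_eq_abs, abs_of_pos (Real.exp_pos _), mul_pow]
    congr 1
    rw [sq, ← Real.exp_add]
    congr 1
    ring
  have hVp : V p = PfX n m p + ‖p.2‖ ^ 2 := hV p
  rw [hV (HX n m lam V t p), hPfH, hrpow, hz, hVp]
  ring



include hV hlam0 hlam1 in
lemma HX_mem {t p} (ht : t ∈ Set.Icc (0:ℝ) 1) (hp : V p ∈ Set.Ioc 0 lam) :
    V (HX n m lam V t p) ∈ Set.Ioc 0 lam := by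
  rw [HX_val hV hlam0 hlam1 ht hp]
  obtain ⟨hp0, hp1⟩ := hp
  constructor
  · exact mul_pos (Real.exp_pos _) hp0
  · have hnum : 0 ≤ Real.log lam - Real.log (V p) :=
      sub_nonneg.mpr ((Real.log_le_log_iff hp0 hlam0).mpr hp1)
    have h1 : t * (Real.log lam - Real.log (V p)) ≤ Real.log lam - Real.log (V p) :=
      mul_le_of_le_one_left hnum ht.2
    have h2 : Real.exp (t * (Real.log lam - Real.log (V p)))
        ≤ Real.exp (Real.log lam - Real.log (V p)) := Real.exp_le_exp.mpr h1
    have h3 : Real.exp (Real.log lam - Real.log (V p)) = lam / V p := by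
      rw [Real.exp_sub, Real.exp_log hlam0, Real.exp_log hp0]
    calc Real.exp (t * (Real.log lam - Real.log (V p))) * V p
        ≤ (lam / V p) * V p := by
          rw [← h3]; exact mul_le_mul_of_nonneg_right h2 hp0.le
      _ = lam := div_mul_cancel₀ lam (ne_of_gt hp0)

include hV hlam0 hlam1 in
lemma HX_one {p} (hp : V p ∈ Set.Ioc 0 lam) : V (HX n m lam V 1 p) = lam := by
  rw [HX_val hV hlam0 hlam1 (by norm_num) hp, one_mul, Real.exp_sub,
    Real.exp_log hlam0, Real.exp_log hp.1]
  exact div_mul_cancel₀ lam (ne_of_gt hp.1)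

lemma HX_zero (p) : HX n m lam V 0 p = p := by
  have hs : sX n m lam V 0 p = 1 := by rw [sX]; ring
  rw [HX, hs]
  refine Prod.ext ?_ ?_
  · funext j; exact angMap_one (p.1 j)
  · show Real.exp (0 * (Real.log lam - Real.log (V p)) / 2) • p.2 = p.2
    rw [zero_mul, zero_div, Real.exp_zero, one_smul]

lemma HX_fix {p} (hp : V p = lam) (t : ℝ) : HX n m lam V t p = p := by
  have hs : sX n m lam V t p = 1 := by
    rw [sX, hp, sub_self, zero_mul, mul_zero, add_zero]
  rw [HX, hs]
  refine Prod.ext ?_ ?_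
  · funext j; exact angMap_one (p.1 j)
  · show Real.exp (t * (Real.log lam - Real.log (V p)) / 2) • p.2 = p.2
    rw [hp, sub_self, mul_zero, zero_div, Real.exp_zero, one_smul]

set_option maxHeartbeats 1000000 in
include hV hlam0 hlam1 in
lemma HX_cont :
    Continuous (fun q : (Set.Icc (0:ℝ) 1) × (V ⁻¹' Set.Ioc 0 lam) =>
      HX n m lam V q.1.1 q.2.1) := by
  have hPfcont : Continuous (PfX n m) := by
    apply continuous_finset_prod
    intro j _
    exact (continuous_const.add
      (Real.Angle.continuous_cos.comp ((continuous_apply j).comp continuous_fst))).div_const 2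
  have hVcont : Continuous V := by
    have hVeq : V = fun p => (∏ j, (1 + Real.Angle.cos (p.1 j)) / 2) + ‖p.2‖ ^ 2 := funext hV
    rw [hVeq]
    exact (hPfcont.add ((continuous_snd.norm).pow 2))
  have htm : Continuous (fun q : (Set.Icc (0:ℝ) 1) × (V ⁻¹' Set.Ioc 0 lam) => (q.1 : ℝ)) :=
    continuous_subtype_val.comp continuous_fst
  have hpm : Continuous (fun q : (Set.Icc (0:ℝ) 1) × (V ⁻¹' Set.Ioc 0 lam) =>
      (q.2 : (Fin n → Real.Angle) × (EuclideanSpace ℝ (Fin m)))) :=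
    continuous_subtype_val.comp continuous_snd
  rw [continuous_iff_continuousAt]
  intro q
  obtain ⟨hq0, hq1⟩ : V q.2.1 ∈ Set.Ioc 0 lam := q.2.2
  -- continuity of the numerator log lam - log (V p)
  have hnum_at : ContinuousAt (fun q' : (Set.Icc (0:ℝ) 1) × (V ⁻¹' Set.Ioc 0 lam) =>
      Real.log lam - Real.log (V q'.2.1)) q := by
    apply continuousAt_const.sub
    have hVcomp : ContinuousAt (fun q' : (Set.Icc (0:ℝ) 1) × (V ⁻¹' Set.Ioc 0 lam) =>
        V q'.2.1) q := (hVcont.comp hpm).continuousAt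
    exact hVcomp.log (ne_of_gt hq0)
  -- continuity of w
  have hw_at : ContinuousAt (fun q' : (Set.Icc (0:ℝ) 1) × (V ⁻¹' Set.Ioc 0 lam) =>
      (Real.log lam - Real.log (V q'.2.1)) * (Real.log (PfX n m q'.2.1))⁻¹) q := by
    by_cases hP : PfX n m q.2.1 = 0
    · have hPt : Tendsto (fun q' : (Set.Icc (0:ℝ) 1) × (V ⁻¹' Set.Ioc 0 lam) =>
          PfX n m q'.2.1) (𝓝 q) (𝓝 0) := by
        have hPcomp : ContinuousAt (fun q' : (Set.Icc (0:ℝ) 1) × (V ⁻¹' Set.Ioc 0 lam) =>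
            PfX n m q'.2.1) q := (hPfcont.comp hpm).continuousAt
        simpa only [hP] using hPcomp.tendsto
      have h1 : Tendsto (fun q' : (Set.Icc (0:ℝ) 1) × (V ⁻¹' Set.Ioc 0 lam) =>
          (Real.log (PfX n m q'.2.1))⁻¹) (𝓝 q) (𝓝 0) := tendsto_log_inv_zero.comp hPt
      have h2 := hnum_at.tendsto.mul h1
      rw [ContinuousAt]
      convert h2 using 2
      rw [hP, Real.log_zero, inv_zero, mul_zero]
    · have hPpos : 0 < PfX n m q.2.1 := lt_of_le_of_ne (PfX_nonneg _) (Ne.symm hP)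
      have hPlt : PfX n m q.2.1 < 1 :=
        lt_of_le_of_lt (le_trans (PfX_le hV _) hq1) hlam1
      have hlogne : Real.log (PfX n m q.2.1) ≠ 0 := ne_of_lt (Real.log_neg hPpos hPlt)
      have hPcomp : ContinuousAt (fun q' : (Set.Icc (0:ℝ) 1) × (V ⁻¹' Set.Ioc 0 lam) =>
          PfX n m q'.2.1) q := (hPfcont.comp hpm).continuousAt
      have hlogP : ContinuousAt (fun q' : (Set.Icc (0:ℝ) 1) × (V ⁻¹' Set.Ioc 0 lam) =>
          Real.log (PfX n m q'.2.1)) q :=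
        hPcomp.log hP
      have hinv : ContinuousAt (fun q' : (Set.Icc (0:ℝ) 1) × (V ⁻¹' Set.Ioc 0 lam) =>
          (Real.log (PfX n m q'.2.1))⁻¹) q := hlogP.inv₀ hlogne
      exact hnum_at.mul hinv
  have hsf_at : ContinuousAt (fun q' : (Set.Icc (0:ℝ) 1) × (V ⁻¹' Set.Ioc 0 lam) =>
      sX n m lam V q'.1.1 q'.2.1) q := by
    simp only [sX]
    exact continuousAt_const.add (htm.continuousAt.mul hw_at)
  -- assemble
  apply ContinuousAt.prodMk
  · apply continuousAt_pi.mpr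
    intro j
    apply angMap_continuousAt hsf_at
    · exact ((continuous_apply j).comp (continuous_fst.comp hpm)).continuousAt
    · exact sX_pos hV hlam0 hlam1 q.1.2 q.2.2
    · intro q'
      exact sX_le_one hV hlam0 hlam1 q'.1.2 q'.2.2
  · apply ContinuousAt.fun_smul
    · exact Real.continuous_exp.continuousAt.comp
        ((htm.continuousAt.mul hnum_at).div_const 2)
    · exact ((continuous_snd.comp hpm)).continuousAt

/-- Let `V(x, z) = ∏ⱼ (1 + cos xⱼ)/2 + ‖z‖²` on `𝕋ⁿ × ℝᵐ` with `𝕋 = ℝ/2πℤ`.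
For `λ ∈ (0, 1)`, the level set `N_λ = V⁻¹({λ})` is a strong deformation retract of
`A' = V⁻¹((0, λ])`. -/
theorem stmt_8 (n m : ℕ) (hn : 1 ≤ n) (hm : 1 ≤ m) (lam : ℝ) (hlam0 : 0 < lam) (hlam1 : lam < 1)
    (V : (Fin n → Real.Angle) × (EuclideanSpace ℝ (Fin m)) → ℝ)
    (hV : ∀ p, V p = (∏ j, (1 + Real.Angle.cos (p.1 j)) / 2) + ‖p.2‖ ^ 2) :
    ∃ H : (Set.Icc (0 : ℝ) 1) × (V ⁻¹' Set.Ioc 0 lam) → (V ⁻¹' Set.Ioc 0 lam),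
      Continuous H ∧
      (∀ a, H (⟨0, by norm_num⟩, a) = a) ∧
      (∀ a, V (H (⟨1, by norm_num⟩, a)).1 = lam) ∧
      (∀ t a, V a.1 = lam → H (t, a) = a) := by
  refine ⟨fun q => ⟨HX n m lam V q.1.1 q.2.1,
    HX_mem hV hlam0 hlam1 q.1.2 q.2.2⟩, ?_, ?_, ?_, ?_⟩
  · exact (HX_cont hV hlam0 hlam1).subtype_mk _
  · intro a
    exact Subtype.ext (HX_zero a.1)
  · intro a
    exact HX_one hV hlam0 hlam1 a.2
  · intro t a h
    exact Subtype.ext (HX_fix h t.1)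
end Main
end

section
/- Let n, m ≥ 1 and λ ∈ (0, 1). Set N_λ := V⁻¹({λ}) and N₀ := V⁻¹({0}), with the metrics inherited from 𝕋ⁿ × ℝᵐ. Then there exist a constant K ≥ 0 and a K-Lipschitz map Φ : N_λ → N₀ such that for every point (x, z) ∈ N_λ with ∏_{j=1}^{n} (1 + cos x_j)/2 = 0 (equivalently, (x, 0) ∈ N₀ and ‖z‖² = λ), one has Φ(x, z) = (x, 0). -/
open scoped NNReal

section AuxLemmas

open Real

/-- Norm of an angle coercion agrees with absolute value in the fundamental domain. -/

lemma angle_norm_coe_eq {r : ℝ} (h : |r| ≤ π) : ‖(r : Real.Angle)‖ = |r| := by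
  have h2 : ((r : ℝ) : Real.Angle) = (↑r : AddCircle (2 * π)) := rfl
  rw [show ‖(r : Real.Angle)‖ = ‖(r : AddCircle (2 * π))‖ from rfl, AddCircle.norm_coe_eq_abs_iff (2 * π) (by positivity)]
  rw [abs_of_pos Real.two_pi_pos]
  linarith

lemma angle_norm_coe_le (r : ℝ) : ‖(r : Real.Angle)‖ ≤ |r| := by
  have h2 : ((r : ℝ) : Real.Angle) = (↑r : ℝ ⧸ AddSubgroup.zmultiples (2 * π)) := rfl
  rw [h2]
  exact (QuotientAddGroup.norm_mk_le_norm (S := AddSubgroup.zmultiples (2 * π)) (m := r)).trans_eq (Real.norm_eq_abs r)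

lemma angle_norm (θ : Real.Angle) : ‖θ‖ = |θ.toReal| := by
  conv_lhs => rw [← θ.coe_toReal]
  exact angle_norm_coe_eq θ.abs_toReal_le_pi


noncomputable def cf (a b r : ℝ) : ℝ := min 1 (max 0 ((b - r) / (b - a)))

lemma cf_nonneg (a b r : ℝ) : 0 ≤ cf a b r := le_min one_pos.le (le_max_left _ _)
lemma cf_le_one (a b r : ℝ) : cf a b r ≤ 1 := min_le_left _ _

lemma cf_eq_one {a b r : ℝ} (hab : a < b) (h : r ≤ a) : cf a b r = 1 := by
  have hba : 0 < b - a := by linarith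
  have h1 : (1:ℝ) ≤ (b - r) / (b - a) := (le_div_iff₀ hba).2 (by linarith)
  have : (1:ℝ) ≤ max 0 ((b - r) / (b - a)) := h1.trans (le_max_right _ _)
  simp [cf, min_eq_left this]

lemma cf_lip {a b r s : ℝ} (hab : a < b) : |cf a b r - cf a b s| ≤ |r - s| / (b - a) := by
  have hba : 0 < b - a := by linarith
  have h1 := abs_min_sub_min_le_max (1:ℝ) (max 0 ((b - r) / (b - a))) 1
      (max 0 ((b - s) / (b - a)))
  have h2 := abs_max_sub_max_le_max (0:ℝ) ((b - r) / (b - a)) 0 ((b - s) / (b - a))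
  simp only [sub_self, abs_zero] at h1 h2
  have key : |(b - r) / (b - a) - (b - s) / (b - a)| = |r - s| / (b - a) := by
    rw [div_sub_div_same, abs_div, abs_of_pos hba]
    congr 1
    rw [show b - r - (b - s) = -(r - s) by ring, abs_neg]
  refine h1.trans (max_le (by positivity) (h2.trans (max_le (by positivity) key.le)))

lemma cf_le_of {a b r δ : ℝ} (hab : a < b) (hδ : 0 ≤ δ) (h : b - r ≤ δ) :
    cf a b r ≤ δ / (b - a) := by
  have hba : 0 < b - a := by linarith
  refine (min_le_right _ _).trans (max_le (by positivity) ?_)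
  gcongr

lemma key_core {a b u v t δ : ℝ} (hab : a < b) (hbπ : b ≤ π) (hu : |u| ≤ π) (hv : |v| ≤ π)
    (ht0 : 0 ≤ t) (htw : t ≤ |u| + |v|) (htπ : t ≤ π) (hu0 : 0 ≤ u) (hv0 : v < 0)
    (hδ : δ = ‖((u - v : ℝ) : Real.Angle)‖) :
    t * (cf a b |u| + cf a b |v|) ≤ (2 + 2 * π / (b - a)) * δ := by
  have hba : 0 < b - a := by linarith
  have hπ := Real.pi_pos
  have hδ0 : 0 ≤ δ := hδ ▸ norm_nonneg _
  have hw : u - v = |u| + |v| := by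
    rw [abs_of_nonneg hu0, abs_of_neg hv0]; ring
  have hw0 : 0 ≤ u - v := by rw [hw]; positivity
  have hc1 := cf_nonneg a b |u|
  have hc2 := cf_nonneg a b |v|
  have hd1 := cf_le_one a b |u|
  have hd2 := cf_le_one a b |v|
  rcases le_or_gt (u - v) π with hcase | hcase
  · -- δ = u - v = |u| + |v|
    have hδval : δ = u - v := by
      rw [hδ, angle_norm_coe_eq (by rw [abs_of_nonneg hw0]; exact hcase), abs_of_nonneg hw0]
    have hnn : 0 ≤ 2 * π / (b - a) * δ := by positivity
    have e : t * (cf a b |u| + cf a b |v|) ≤ 2 * t := by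
      nlinarith [mul_le_mul_of_nonneg_left hd1 ht0, mul_le_mul_of_nonneg_left hd2 ht0]
    have htδ : t ≤ δ := by rw [hδval, hw]; exact htw
    nlinarith
  · -- δ = 2π - (u - v)
    have hδval : δ = 2 * π - (u - v) := by
      have hco : ((u - v : ℝ) : Real.Angle) = ((u - v - 2 * π : ℝ) : Real.Angle) := by
        rw [Real.Angle.coe_sub (u - v) (2 * π), Real.Angle.coe_two_pi, sub_zero]
      have habs : |u - v - 2 * π| ≤ π := by
        rw [abs_le]
        constructor <;> nlinarith [abs_nonneg u, abs_nonneg v, hw]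
      rw [hδ, hco, angle_norm_coe_eq habs, abs_of_nonpos (by nlinarith [hw])]
      ring
    have hbu : b - |u| ≤ δ := by nlinarith [abs_nonneg v, hw]
    have hbv : b - |v| ≤ δ := by nlinarith [abs_nonneg u, hw]
    have h1 := cf_le_of hab hδ0 hbu
    have h2 := cf_le_of hab hδ0 hbv
    have e1 : t * (cf a b |u| + cf a b |v|) ≤ π * (δ / (b - a)) + π * (δ / (b - a)) := by
      nlinarith [mul_le_mul_of_nonneg_left h1 ht0, mul_le_mul_of_nonneg_left h2 ht0,
        mul_le_mul_of_nonneg_right htπ hc1, mul_le_mul_of_nonneg_right htπ hc2]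
    refine e1.trans ?_
    have heq : π * (δ / (b - a)) + π * (δ / (b - a)) = 2 * π / (b - a) * δ := by
      field_simp; ring
    have hexp : (2 + 2 * π / (b - a)) * δ = 2 * δ + 2 * π / (b - a) * δ := by ring
    linarith

lemma key_s9 {a b u v t δ : ℝ} (hab : a < b) (hbπ : b ≤ π) (hu : |u| ≤ π) (hv : |v| ≤ π)
    (ht0 : 0 ≤ t) (htu : t ≤ |u|) (htπ : t ≤ π)
    (hδ : δ = ‖((u - v : ℝ) : Real.Angle)‖) :
    t * abs ((if 0 ≤ u then (1:ℝ) else -1) * cf a b |u| -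
        (if 0 ≤ v then (1:ℝ) else -1) * cf a b |v|) ≤ (2 + 2 * π / (b - a)) * δ := by
  have hba : 0 < b - a := by linarith
  have hπ := Real.pi_pos
  have hδ0 : 0 ≤ δ := hδ ▸ norm_nonneg _
  have hc1 := cf_nonneg a b |u|
  have hc2 := cf_nonneg a b |v|
  have habsuv : abs (|u| - |v|) ≤ δ := by
    have h1 : ‖(u : Real.Angle)‖ = |u| := angle_norm_coe_eq hu
    have h2 : ‖(v : Real.Angle)‖ = |v| := angle_norm_coe_eq hv
    rw [hδ, Real.Angle.coe_sub, ← h1, ← h2]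
    exact abs_norm_sub_norm_le _ _
  have same : abs (cf a b |u| - cf a b |v|) ≤ δ / (b - a) :=
    (cf_lip hab).trans (by gcongr)
  have hsame : t * abs (cf a b |u| - cf a b |v|) ≤ (2 + 2 * π / (b - a)) * δ := by
    have e1 : t * abs (cf a b |u| - cf a b |v|) ≤ π * (δ / (b - a)) := by
      have := mul_le_mul htπ same (abs_nonneg _) hπ.le
      linarith
    have heq : π * (δ / (b - a)) = π / (b - a) * δ := by ring
    have h0 : 0 ≤ π / (b - a) * δ := mul_nonneg (div_nonneg hπ.le hba.le) hδ0
    have hexp : (2 + 2 * π / (b - a)) * δ = 2 * δ + 2 * (π / (b - a) * δ) := by ring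
    linarith
  by_cases hu0 : 0 ≤ u <;> by_cases hv0 : 0 ≤ v
  · simp only [if_pos hu0, if_pos hv0, one_mul]
    exact hsame
  · simp only [if_pos hu0, if_neg hv0, one_mul]
    have : abs (cf a b |u| - -1 * cf a b |v|) = cf a b |u| + cf a b |v| := by
      rw [show cf a b |u| - -1 * cf a b |v| = cf a b |u| + cf a b |v| by ring]
      exact abs_of_nonneg (by linarith)
    rw [this]
    exact key_core hab hbπ hu hv ht0 (htu.trans (by linarith [abs_nonneg v])) htπ hu0
      (lt_of_not_ge hv0) hδ
  · simp only [if_neg hu0, if_pos hv0, one_mul]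
    have : abs (-1 * cf a b |u| - cf a b |v|) = cf a b |v| + cf a b |u| := by
      rw [show -1 * cf a b |u| - cf a b |v| = -(cf a b |v| + cf a b |u|) by ring, abs_neg]
      exact abs_of_nonneg (by linarith)
    rw [this]
    refine key_core hab hbπ hv hu ht0 (htu.trans (by linarith [abs_nonneg v])) htπ hv0
      (lt_of_not_ge hu0) ?_
    rw [hδ]
    rw [show ((v - u : ℝ) : Real.Angle) = -((u - v : ℝ) : Real.Angle) by
      rw [← Real.Angle.coe_neg]; norm_num, norm_neg]
  · simp only [if_neg hu0, if_neg hv0]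
    have : abs (-1 * cf a b |u| - -1 * cf a b |v|) = abs (cf a b |u| - cf a b |v|) := by
      rw [show -1 * cf a b |u| - -1 * cf a b |v| = -(cf a b |u| - cf a b |v|) by ring, abs_neg]
    rw [this]
    exact hsame

/-- Let `V(x, z) = ∏ⱼ (1 + cos xⱼ)/2 + ‖z‖²` on `𝕋ⁿ × ℝᵐ` with `𝕋 = ℝ/2πℤ`.
For `λ ∈ (0, 1)`, there is a Lipschitz map `Φ : N_λ = V⁻¹({λ}) → N₀ = V⁻¹({0})`
such that `Φ(x, z) = (x, 0)` whenever `(x, z) ∈ N_λ` satisfies `∏ⱼ (1 + cos xⱼ)/2 = 0`. -/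
theorem stmt_9 (n m : ℕ) (hn : 1 ≤ n) (hm : 1 ≤ m) (lam : ℝ) (hlam0 : 0 < lam) (hlam1 : lam < 1)
    (V : (Fin n → Real.Angle) × (EuclideanSpace ℝ (Fin m)) → ℝ)
    (hV : ∀ p, V p = (∏ j, (1 + Real.Angle.cos (p.1 j)) / 2) + ‖p.2‖ ^ 2) :
    ∃ (K : ℝ≥0) (Φ : (V ⁻¹' {lam}) → (V ⁻¹' {0})),
      LipschitzWith K Φ ∧
      ∀ p : V ⁻¹' {lam}, (∏ j, (1 + Real.Angle.cos (p.1.1 j)) / 2) = 0 →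
        ((Φ p).1 : (Fin n → Real.Angle) × (EuclideanSpace ℝ (Fin m))) = (p.1.1, 0) := by
  classical
  haveI : Nonempty (Fin n) := Fin.pos_iff_nonempty.mp hn
  have hπ := Real.pi_pos
  -- parameters
  set l : ℝ := lam ^ ((1 : ℝ) / (n : ℝ)) with hl
  have hn0 : (0:ℝ) < (n:ℝ) := by exact_mod_cast hn
  have hl0 : 0 < l := Real.rpow_pos_of_pos hlam0 _
  have hl1 : l < 1 := Real.rpow_lt_one hlam0.le hlam1 (by positivity)
  have hln : l ^ n = lam := by
    rw [hl, ← Real.rpow_natCast (lam ^ ((1:ℝ)/(n:ℝ))) n, ← Real.rpow_mul hlam0.le]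
    rw [one_div, inv_mul_cancel₀ hn0.ne', Real.rpow_one]
  set a : ℝ := Real.arccos (1 - 2 * l) with ha
  have hcosa : Real.cos a = 1 - 2 * l := Real.cos_arccos (by linarith) (by linarith)
  have ha0 : 0 < a := Real.arccos_pos.2 (by linarith)
  have haπ' : a ≤ π := Real.arccos_le_pi _
  have haπ : a < π := lt_of_le_of_ne haπ' (fun h => by
    rw [h, Real.cos_pi] at hcosa; linarith)
  set b : ℝ := (a + π) / 2 with hb
  have hab : a < b := by rw [hb]; linarith
  have hbπ : b ≤ π := by rw [hb]; linarith
  have hba : 0 < b - a := by linarith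
  -- basic functions
  set d : (Fin n → Real.Angle) → Fin n → ℝ :=
    fun x j => ‖x j - ((π : ℝ) : Real.Angle)‖ with hdd
  set tm : (Fin n → Real.Angle) → ℝ :=
    fun x => Finset.univ.inf' Finset.univ_nonempty (d x) with htm
  set G : Real.Angle → ℝ := fun θ =>
    (if 0 ≤ (θ - ((π : ℝ) : Real.Angle)).toReal then (1:ℝ) else -1) *
      cf a b ‖θ - ((π : ℝ) : Real.Angle)‖ with hG
  set σ : (Fin n → Real.Angle) → (Fin n → Real.Angle) :=
    fun x j => x j - ((G (x j) * tm x : ℝ) : Real.Angle) with hσ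
  have htm0 : ∀ x, 0 ≤ tm x := fun x => Finset.le_inf' _ _ (fun j _ => norm_nonneg _)
  have htmle : ∀ x j, tm x ≤ d x j := fun x j => Finset.inf'_le _ (Finset.mem_univ j)
  have hdabs : ∀ x j, d x j = |(x j - ((π : ℝ) : Real.Angle)).toReal| := fun x j => by
    simp only [hdd]; exact angle_norm _
  have hdπ : ∀ x j, d x j ≤ π := fun x j => by
    rw [hdabs]; exact Real.Angle.abs_toReal_le_pi _
  -- cosine formula
  have hcosθ : ∀ θ : Real.Angle,
      Real.Angle.cos θ = -Real.cos (θ - ((π : ℝ) : Real.Angle)).toReal := by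
    intro θ
    have h1 : (((θ - ((π : ℝ) : Real.Angle)).toReal : ℝ) : Real.Angle)
        = θ - ((π : ℝ) : Real.Angle) := Real.Angle.coe_toReal _
    have h2 : θ = (((θ - ((π : ℝ) : Real.Angle)).toReal + π : ℝ) : Real.Angle) := by
      rw [Real.Angle.coe_add, h1]; abel
    conv_lhs => rw [h2]
    rw [Real.Angle.cos_coe, Real.cos_add_pi]
  -- Fact A : some coordinate is within `a` of π
  have hsmall : ∀ p : (Fin n → Real.Angle) × EuclideanSpace ℝ (Fin m),
      V p = lam → ∃ j, d p.1 j ≤ a := by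
    intro p hp
    by_contra hno
    push_neg at hno
    have hfac : ∀ j, l < (1 + Real.Angle.cos (p.1 j)) / 2 := by
      intro j
      have hu : |(p.1 j - ((π : ℝ) : Real.Angle)).toReal| ≤ π := Real.Angle.abs_toReal_le_pi _
      have hda : a < |(p.1 j - ((π : ℝ) : Real.Angle)).toReal| := by
        rw [← hdabs]; exact hno j
      have hcc : Real.cos |(p.1 j - ((π : ℝ) : Real.Angle)).toReal| < Real.cos a :=
        Real.cos_lt_cos_of_nonneg_of_le_pi ha0.le hu hda
      rw [Real.cos_abs] at hcc
      rw [hcosθ (p.1 j)]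
      linarith [hcosa]
    have hprodgt : lam < ∏ j, (1 + Real.Angle.cos (p.1 j)) / 2 := by
      have h := Finset.prod_lt_prod_of_nonempty (f := fun _ : Fin n => l)
        (g := fun j => (1 + Real.Angle.cos (p.1 j)) / 2)
        (fun i _ => hl0) (fun i _ => hfac i) Finset.univ_nonempty
      rwa [Finset.prod_const, Finset.card_univ, Fintype.card_fin, hln] at h
    have hle : (∏ j, (1 + Real.Angle.cos (p.1 j)) / 2) ≤ lam := by
      rw [hV p] at hp
      have : (0:ℝ) ≤ ‖p.2‖ ^ 2 := by positivity
      linarith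
    linarith
  -- the map lands in N₀
  have hmem : ∀ p : (Fin n → Real.Angle) × EuclideanSpace ℝ (Fin m), V p = lam →
      V (σ p.1, 0) = 0 := by
    intro p hp
    obtain ⟨j0, -, hj0⟩ := Finset.exists_mem_eq_inf' (Finset.univ_nonempty) (d p.1)
    have htmeq : tm p.1 = d p.1 j0 := hj0
    obtain ⟨j1, hj1⟩ := hsmall p hp
    have hj0a : d p.1 j0 ≤ a := by
      rw [← htmeq]; exact (htmle p.1 j1).trans hj1
    have hd0 : d p.1 j0 = |(p.1 j0 - ((π : ℝ) : Real.Angle)).toReal| := hdabs p.1 j0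
    have hcf1 : cf a b |(p.1 j0 - ((π : ℝ) : Real.Angle)).toReal| = 1 :=
      cf_eq_one hab (hd0 ▸ hj0a)
    have hval : G (p.1 j0) * tm p.1 = (p.1 j0 - ((π : ℝ) : Real.Angle)).toReal := by
      simp only [hG]
      rw [angle_norm, htmeq, hd0, hcf1, mul_one]
      split_ifs with h
      · rw [one_mul, abs_of_nonneg h]
      · rw [neg_one_mul, abs_of_neg (lt_of_not_ge h)]; ring
    have hσj0 : σ p.1 j0 = ((π : ℝ) : Real.Angle) := by
      simp only [hσ]
      rw [hval, Real.Angle.coe_toReal]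
      exact sub_sub_cancel _ _
    rw [hV]
    simp only [norm_zero]
    have hz : ((0:ℝ)) ^ 2 = 0 := by norm_num
    rw [hz, add_zero]
    refine Finset.prod_eq_zero (Finset.mem_univ j0) ?_
    rw [hσj0, Real.Angle.cos_coe, Real.cos_pi]
    norm_num
  -- identity on the zero set
  have hid : ∀ x : Fin n → Real.Angle,
      (∏ j, (1 + Real.Angle.cos (x j)) / 2) = 0 → σ x = x := by
    intro x hx
    obtain ⟨j, -, hj⟩ := Finset.prod_eq_zero_iff.mp hx
    have hcos : Real.Angle.cos (x j) = -1 := by linarith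
    have hu : (x j - ((π : ℝ) : Real.Angle)).toReal = 0 := by
      have h1 := hcosθ (x j)
      rw [hcos] at h1
      have h2 : Real.cos ((x j - ((π : ℝ) : Real.Angle)).toReal) = 1 := by linarith
      have habs := Real.Angle.abs_toReal_le_pi (x j - ((π : ℝ) : Real.Angle))
      rw [abs_le] at habs
      exact (Real.cos_eq_one_iff_of_lt_of_lt (by linarith) (by linarith)).1 h2
    have hdj : d x j = 0 := by rw [hdabs, hu, abs_zero]
    have htmz : tm x = 0 := le_antisymm (hdj ▸ htmle x j) (htm0 x)
    funext j'
    simp only [hσ]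
    rw [htmz, mul_zero, Real.Angle.coe_zero, sub_zero]
  -- assemble
  refine ⟨Real.toNNReal (4 + 2 * π / (b - a)), fun p => ⟨(σ p.1.1, 0), ?_⟩, ?_, ?_⟩
  · exact hmem p.1 p.2
  · apply LipschitzWith.of_dist_le_mul
    intro p q
    have hK : ((Real.toNNReal (4 + 2 * π / (b - a)) : ℝ≥0) : ℝ) = 4 + 2 * π / (b - a) :=
      Real.coe_toNNReal _ (by positivity)
    rw [hK]
    set x := p.1.1 with hx
    set y := q.1.1 with hy
    set D := dist p.1 q.1 with hD
    have hD0 : 0 ≤ D := dist_nonneg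
    have hpq : dist p q = D := Subtype.dist_eq p q
    have hxyD : dist x y ≤ D := by rw [hD, Prod.dist_eq]; exact le_max_left _ _
    have hjD : ∀ j, dist (x j) (y j) ≤ D := fun j => (dist_le_pi_dist x y j).trans hxyD
    have hdLip : ∀ j, |d x j - d y j| ≤ D := by
      intro j
      have h1 : d x j - d y j ≤ dist (x j) (y j) := by
        simp only [hdd]
        have h := norm_sub_norm_le (x j - ((π : ℝ) : Real.Angle)) (y j - ((π : ℝ) : Real.Angle))
        rwa [sub_sub_sub_cancel_right, ← dist_eq_norm (x j) (y j)] at h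
      have h2 : d y j - d x j ≤ dist (x j) (y j) := by
        simp only [hdd]
        have h := norm_sub_norm_le (y j - ((π : ℝ) : Real.Angle)) (x j - ((π : ℝ) : Real.Angle))
        rw [sub_sub_sub_cancel_right] at h
        rw [dist_comm, dist_eq_norm]
        exact h
      rw [abs_sub_le_iff]
      exact ⟨h1.trans (hjD j), h2.trans (hjD j)⟩
    have htmLip : |tm x - tm y| ≤ D := by
      rw [abs_sub_le_iff]
      constructor
      · obtain ⟨j, -, hj⟩ := Finset.exists_mem_eq_inf' Finset.univ_nonempty (d y)
        have h1 : tm x ≤ d x j := htmle x j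
        have h2 := (abs_sub_le_iff.mp (hdLip j)).1
        have h3 : tm y = d y j := hj
        linarith
      · obtain ⟨j, -, hj⟩ := Finset.exists_mem_eq_inf' Finset.univ_nonempty (d x)
        have h1 : tm y ≤ d y j := htmle y j
        have h2 := (abs_sub_le_iff.mp (hdLip j)).2
        have h3 : tm x = d x j := hj
        linarith
    rw [hpq, Subtype.dist_eq, Prod.dist_eq]
    have hKD0 : (0:ℝ) ≤ (4 + 2 * π / (b - a)) * D := by positivity
    rw [max_le_iff]
    constructor
    · rw [dist_pi_le_iff hKD0]
      intro j
      set u := (x j - ((π : ℝ) : Real.Angle)).toReal with hu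
      set v := (y j - ((π : ℝ) : Real.Angle)).toReal with hv
      have hGx : G (x j) = (if 0 ≤ u then (1:ℝ) else -1) * cf a b |u| := by
        simp only [hG]; rw [angle_norm]
      have hGy : G (y j) = (if 0 ≤ v then (1:ℝ) else -1) * cf a b |v| := by
        simp only [hG]; rw [angle_norm]
      have hδeq : dist (x j) (y j) = ‖((u - v : ℝ) : Real.Angle)‖ := by
        rw [dist_eq_norm, Real.Angle.coe_sub, Real.Angle.coe_toReal, Real.Angle.coe_toReal,
          sub_sub_sub_cancel_right]
      have hkey : tm x * |G (x j) - G (y j)| ≤ (2 + 2 * π / (b - a)) * dist (x j) (y j) := by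
        rw [hGx, hGy]
        exact key_s9 hab hbπ (Real.Angle.abs_toReal_le_pi _) (Real.Angle.abs_toReal_le_pi _)
          (htm0 x) (by rw [← hdabs]; exact htmle x j) ((htmle x j).trans (hdπ x j)) hδeq
      have hGy1 : |G (y j)| ≤ 1 := by
        rw [hGy, abs_mul]
        have h1 : |(if 0 ≤ v then (1:ℝ) else -1)| = 1 := by split_ifs <;> simp
        rw [h1, one_mul, abs_of_nonneg (cf_nonneg _ _ _)]
        exact cf_le_one _ _ _
      have hFdiff : |G (x j) * tm x - G (y j) * tm y|
          ≤ tm x * |G (x j) - G (y j)| + |G (y j)| * |tm x - tm y| := by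
        have he : G (x j) * tm x - G (y j) * tm y
            = tm x * (G (x j) - G (y j)) + G (y j) * (tm x - tm y) := by ring
        rw [he]
        refine (abs_add_le _ _).trans ?_
        rw [abs_mul, abs_mul, abs_of_nonneg (htm0 x)]
      have hstep : dist (σ x j) (σ y j)
          ≤ dist (x j) (y j) + |G (x j) * tm x - G (y j) * tm y| := by
        simp only [hσ]
        rw [dist_eq_norm, sub_sub_sub_comm, ← Real.Angle.coe_sub]
        refine (norm_sub_le _ _).trans ?_
        rw [← dist_eq_norm]
        exact add_le_add le_rfl (angle_norm_coe_le _)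
      have hGt : |G (y j)| * |tm x - tm y| ≤ 1 * D :=
        mul_le_mul hGy1 htmLip (abs_nonneg _) one_pos.le
      have hkey2 : (2 + 2 * π / (b - a)) * dist (x j) (y j) ≤ (2 + 2 * π / (b - a)) * D :=
        mul_le_mul_of_nonneg_left (hjD j) (by positivity)
      have hfin : (2 + 2 * π / (b - a)) * D + D + D ≤ (4 + 2 * π / (b - a)) * D := by
        have : (2 + 2 * π / (b - a)) * D + D + D = (4 + 2 * π / (b - a)) * D := by ring
        linarith
      calc dist (σ x j) (σ y j)
          ≤ dist (x j) (y j) + |G (x j) * tm x - G (y j) * tm y| := hstep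
        _ ≤ D + (tm x * |G (x j) - G (y j)| + |G (y j)| * |tm x - tm y|) :=
            add_le_add (hjD j) hFdiff
        _ ≤ D + ((2 + 2 * π / (b - a)) * D + 1 * D) := by
            refine add_le_add le_rfl (add_le_add (hkey.trans hkey2) hGt)
        _ ≤ (4 + 2 * π / (b - a)) * D := by linarith
    · rw [dist_self]; exact hKD0
  · intro p hp
    exact congrArg (fun s => (s, (0 : EuclideanSpace ℝ (Fin m)))) (hid p.1.1 hp)
end AuxLemmas
end
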